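/- arXiv:2602.02254 — 12 statements merged into one kernel-verified Lean document; each statement's English description precedes it below -/
import Mathlib

section
/- Let I be a stable matching instance with complete preference lists on both sides (|R| = |H| = n), and let Î be a prefix-truncated instance of I. If some perfect stable matching μ of I exists in Î (i.e., μ(h) is on h's truncated list for every hospital h), then every stable matching of Î is perfect and is stable in I. -/
/-- A stable matching instance: each resident has a preference list over hospitals
and each hospital has a preference list over residents. -/
structure SMInstance (R H : Type*) where
  Lr : R → List H
  Lh : H → List R

/-- A (partial) matching, given by mutually consistent partner functions. -/
structure SMatching (R H : Type*) where
  mr : R → Option H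
  mh : H → Option R
  consistent : ∀ r h, mr r = some h ↔ mh h = some r

/-- An agent with preference list `l`, currently matched according to `o`,
strictly prefers `x` to its current situation: `x` is acceptable, and the agent
is either unmatched or ranks `x` above its current partner. -/
def prefersOver {α : Type*} [DecidableEq α] (l : List α) (x : α) (o : Option α) : Prop :=
  x ∈ l ∧ ∀ y, o = some y → l.idxOf x < l.idxOf y

/-- With respect to list `l`, outcome `o₁` is weakly preferred to outcome `o₂`:
whenever `o₂` is matched, so is `o₁`, to a partner of weakly better rank. -/
def weaklyPrefers {α : Type*} [DecidableEq α] (l : List α) (o₁ o₂ : Option α) : Prop :=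
  ∀ y, o₂ = some y → ∃ x, o₁ = some x ∧ l.idxOf x ≤ l.idxOf y

variable {R H : Type*} [DecidableEq R] [DecidableEq H]

/-- `(r, h)` is a blocking pair for `μ` in instance `I`. -/
def SMInstance.Blocking (I : SMInstance R H) (μ : SMatching R H) (r : R) (h : H) : Prop :=
  prefersOver (I.Lr r) h (μ.mr r) ∧ prefersOver (I.Lh h) r (μ.mh h)

/-- The matching `μ` exists in the instance `I`: matched partners are on each other's lists. -/
def SMInstance.ExistsIn (I : SMInstance R H) (μ : SMatching R H) : Prop :=
  (∀ r h, μ.mr r = some h → h ∈ I.Lr r) ∧ (∀ h r, μ.mh h = some r → r ∈ I.Lh h)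

/-- `μ` is stable in `I`: it exists in `I` and admits no blocking pair. -/
def SMInstance.IsStable (I : SMInstance R H) (μ : SMatching R H) : Prop :=
  I.ExistsIn μ ∧ ∀ r h, ¬ I.Blocking μ r h

/-- Preference lists are strict (no repetitions). -/
def SMInstance.Nodups (I : SMInstance R H) : Prop :=
  (∀ r, (I.Lr r).Nodup) ∧ (∀ h, (I.Lh h).Nodup)

/-- Preference lists are complete: every agent ranks every agent on the other side. -/
def SMInstance.Complete (I : SMInstance R H) : Prop :=
  (∀ r h, h ∈ I.Lr r) ∧ (∀ h r, r ∈ I.Lh h)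

lemma indexOf_take_eq {α : Type*} [DecidableEq α] {x : α} {l : List α} {n : ℕ}
    (hx : x ∈ l.take n) : l.idxOf x = (l.take n).idxOf x := by
  conv_lhs => rw [← List.take_append_drop n l]
  exact List.idxOf_append_of_mem hx

lemma indexOf_lt_of_mem_take {α : Type*} [DecidableEq α] {x : α} {l : List α} {n : ℕ}
    (hx : x ∈ l.take n) : l.idxOf x < n := by
  have h1 : (l.take n).idxOf x < (l.take n).length := List.idxOf_lt_length_iff.2 hx
  rw [← indexOf_take_eq hx] at h1
  exact lt_of_lt_of_le h1 (by rw [List.length_take]; exact min_le_left _ _)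

lemma le_indexOf_of_not_mem_take {α : Type*} [DecidableEq α] {x : α} {l : List α} {n : ℕ}
    (hx : x ∈ l) (hnx : x ∉ l.take n) : n ≤ l.idxOf x := by
  by_contra hlt
  push_neg at hlt
  have hl : l.idxOf x < l.length := List.idxOf_lt_length_iff.2 hx
  have hlen : l.idxOf x < (l.take n).length := by
    rw [List.length_take]; exact lt_min hlt hl
  have hmem : (l.take n)[l.idxOf x]'hlen ∈ l.take n := List.getElem_mem hlen
  rw [List.getElem_take, List.getElem_idxOf hl] at hmem
  exact hnx hmem

lemma filter_indexOf_lt {α : Type*} [DecidableEq α] (p : α → Bool) :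
    ∀ (l : List α), l.Nodup → ∀ a b, a ∈ l.filter p → b ∈ l.filter p →
      l.idxOf a < l.idxOf b → (l.filter p).idxOf a < (l.filter p).idxOf b := by
  intro l
  induction l with
  | nil => simp
  | cons c t ih =>
    intro hnd a b ha hb hlt
    have hndt := hnd.of_cons
    by_cases hpc : p c
    · rw [List.filter_cons_of_pos hpc] at ha hb ⊢
      by_cases hac : a = c
      · subst hac
        have hba : b ≠ a := by
          rintro rfl; exact lt_irrefl _ hlt
        rw [List.idxOf_cons_self, List.idxOf_cons_ne _ (Ne.symm hba)]
        exact Nat.succ_pos _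
      · have hbc : b ≠ c := by
          rintro rfl
          rw [List.idxOf_cons_self] at hlt
          exact Nat.not_lt_zero _ hlt
        have ha' : a ∈ t.filter p := by
          rcases List.mem_cons.1 ha with h | h
          · exact absurd h hac
          · exact h
        have hb' : b ∈ t.filter p := by
          rcases List.mem_cons.1 hb with h | h
          · exact absurd h hbc
          · exact h
        rw [List.idxOf_cons_ne _ (Ne.symm hac), List.idxOf_cons_ne _ (Ne.symm hbc)] at hlt ⊢
        exact Nat.succ_lt_succ (ih hndt a b ha' hb' (Nat.lt_of_succ_lt_succ hlt))
    · rw [List.filter_cons_of_neg hpc] at ha hb ⊢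
      have hct : c ∉ t := (List.nodup_cons.1 hnd).1
      have hac : a ≠ c := by rintro rfl; exact hct (List.mem_of_mem_filter ha)
      have hbc : b ≠ c := by rintro rfl; exact hct (List.mem_of_mem_filter hb)
      rw [List.idxOf_cons_ne _ (Ne.symm hac), List.idxOf_cons_ne _ (Ne.symm hbc)] at hlt
      exact ih hndt a b ha hb (Nat.lt_of_succ_lt_succ hlt)

/-- If `I` has complete lists on both sides (equal cardinalities) and a
perfect stable matching `μ` of `I` survives in the prefix-truncated instance `Ihat`, then
every stable matching of `Ihat` is perfect and stable in `I`. -/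
theorem prefix_truncation_preserves_perfection
    {R H : Type*} [DecidableEq R] [DecidableEq H] [Fintype R] [Fintype H]
    (hcard : Fintype.card R = Fintype.card H)
    (I Ihat : SMInstance R H) (hC : I.Complete) (hN : I.Nodups)
    (ρ : H → ℕ)
    (hLh : ∀ h, Ihat.Lh h = (I.Lh h).take (ρ h))
    (hLr : ∀ r, Ihat.Lr r = (I.Lr r).filter (fun h => decide (r ∈ Ihat.Lh h)))
    (μ : SMatching R H) (hstab : I.IsStable μ)
    (hperf : (∀ r, μ.mr r ≠ none) ∧ (∀ h, μ.mh h ≠ none))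
    (hsurv : ∀ h r, μ.mh h = some r → r ∈ Ihat.Lh h)
    (ν : SMatching R H) (hν : Ihat.IsStable ν) :
    ((∀ r, ν.mr r ≠ none) ∧ (∀ h, ν.mh h ≠ none)) ∧ I.IsStable ν := by
  obtain ⟨hCr, hCh⟩ := hC
  obtain ⟨hNr, hNh⟩ := hN
  obtain ⟨⟨hνEr, hνEh⟩, hνB⟩ := hν
  obtain ⟨-, hμB⟩ := hstab
  have hIdxh : ∀ h r, r ∈ Ihat.Lh h → (Ihat.Lh h).idxOf r = (I.Lh h).idxOf r := by
    intro h r hr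
    rw [hLh] at hr ⊢
    exact (indexOf_take_eq hr).symm
  have hIdxr : ∀ r h h', h ∈ Ihat.Lr r → h' ∈ Ihat.Lr r →
      (I.Lr r).idxOf h < (I.Lr r).idxOf h' →
      (Ihat.Lr r).idxOf h < (Ihat.Lr r).idxOf h' := by
    intro r h h' hh hh' hlt
    rw [hLr] at hh hh' ⊢
    exact filter_indexOf_lt _ _ (hNr r) h h' hh hh' hlt
  have hmemLr : ∀ r h, r ∈ Ihat.Lh h → h ∈ Ihat.Lr r := by
    intro r h hr
    rw [hLr]
    exact List.mem_filter.2 ⟨hCr r h, by simpa using hr⟩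
  have μinj : ∀ a b hh, μ.mr a = some hh → μ.mr b = some hh → a = b := by
    intro a b hh ha hb
    have ha' := (μ.consistent a hh).1 ha
    have hb' := (μ.consistent b hh).1 hb
    exact Option.some_inj.1 (ha'.symm.trans hb')
  -- the key step lemma for the alternating chain
  have step : ∀ r h, μ.mr r = some h → prefersOver (I.Lr r) h (ν.mr r) →
      ∃ r' h', ν.mr r' = some h ∧ μ.mr r' = some h' ∧ prefersOver (I.Lr r') h' (ν.mr r') := by
    intro r h hμr hpref
    have hμh : μ.mh h = some r := (μ.consistent r h).1 hμr
    have hrIn : r ∈ Ihat.Lh h := hsurv h r hμh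
    have hhIn : h ∈ Ihat.Lr r := hmemLr r h hrIn
    have first : prefersOver (Ihat.Lr r) h (ν.mr r) := by
      refine ⟨hhIn, fun y hy => ?_⟩
      exact hIdxr r h y hhIn (hνEr r y hy) (hpref.2 y hy)
    obtain ⟨r', hνh⟩ : ∃ r', ν.mh h = some r' := by
      rcases hmh : ν.mh h with _ | r'
      · exact absurd ⟨first, ⟨hrIn, fun y hy => by rw [hmh] at hy; cases hy⟩⟩ (hνB r h)
      · exact ⟨r', rfl⟩
    have hne : r' ≠ r := by
      rintro rfl
      have : ν.mr r' = some h := (ν.consistent r' h).2 hνh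
      exact lt_irrefl _ (hpref.2 h this)
    have hr'In : r' ∈ Ihat.Lh h := hνEh h r' hνh
    have hlehat : ¬ (Ihat.Lh h).idxOf r < (Ihat.Lh h).idxOf r' := by
      intro hlt
      exact hνB r h ⟨first, ⟨hrIn, fun y hy => by rw [hνh] at hy; cases hy; exact hlt⟩⟩
    have hlt' : (Ihat.Lh h).idxOf r' < (Ihat.Lh h).idxOf r :=
      lt_of_le_of_ne (Nat.le_of_not_lt hlehat)
        (fun he => hne ((List.idxOf_inj hr'In).1 he))
    have hltI : (I.Lh h).idxOf r' < (I.Lh h).idxOf r := by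
      rw [← hIdxh h r' hr'In, ← hIdxh h r hrIn]; exact hlt'
    obtain ⟨h'', hμr'⟩ : ∃ h'', μ.mr r' = some h'' :=
      Option.ne_none_iff_exists'.1 (hperf.1 r')
    have hνr' : ν.mr r' = some h := (ν.consistent r' h).2 hνh
    have hsecond : prefersOver (I.Lh h) r' (μ.mh h) := by
      refine ⟨hCh h r', fun y hy => ?_⟩
      rw [hμh] at hy; cases hy; exact hltI
    have hle : (I.Lr r').idxOf h'' ≤ (I.Lr r').idxOf h := by
      by_contra hcon
      push_neg at hcon
      exact hμB r' h ⟨⟨hCr r' h, fun y hy => by rw [hμr'] at hy; cases hy; exact hcon⟩, hsecond⟩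
    have hne2 : h'' ≠ h := by
      rintro rfl
      have h1 := (μ.consistent r' h'').1 hμr'
      exact hne (Option.some_inj.1 (h1.symm.trans hμh))
    have hltfin : (I.Lr r').idxOf h'' < (I.Lr r').idxOf h :=
      lt_of_le_of_ne hle (fun he => hne2 ((List.idxOf_inj (hCr r' h'')).1 he))
    exact ⟨r', h'', hνr', hμr', ⟨hCr r' h'', fun y hy => by
      rw [hνr'] at hy; cases hy; exact hltfin⟩⟩
  -- every resident is matched in ν
  have hRperf : ∀ r, ν.mr r ≠ none := by
    by_contra hcon
    push_neg at hcon
    obtain ⟨r₀, hr₀⟩ := hcon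
    obtain ⟨h₀, hμ₀⟩ : ∃ h₀, μ.mr r₀ = some h₀ := Option.ne_none_iff_exists'.1 (hperf.1 r₀)
    have good₀ : ∃ hh, μ.mr r₀ = some hh ∧ prefersOver (I.Lr r₀) hh (ν.mr r₀) :=
      ⟨h₀, hμ₀, ⟨hCr r₀ h₀, fun y hy => by rw [hr₀] at hy; cases hy⟩⟩
    let T := {r : R // ∃ hh, μ.mr r = some hh ∧ prefersOver (I.Lr r) hh (ν.mr r)}
    have stepT : ∀ t : T, ∃ r' : T, ν.mr r'.1 = μ.mr t.1 := by
      rintro ⟨r, hh, hμr, hp⟩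
      obtain ⟨r', h', h1, h2, h3⟩ := step r hh hμr hp
      exact ⟨⟨r', h', h2, h3⟩, by rw [h1, hμr]⟩
    let f : T → T := fun t => (stepT t).choose
    have hf : ∀ t : T, ν.mr (f t).1 = μ.mr t.1 := fun t => (stepT t).choose_spec
    let seq : ℕ → T := fun n => f^[n] ⟨r₀, good₀⟩
    have hseq : ∀ n, ν.mr (seq (n+1)).1 = μ.mr (seq n).1 := by
      intro n
      have h1 : seq (n+1) = f (seq n) := Function.iterate_succ_apply' f n _
      rw [h1]; exact hf (seq n)
    have hseq0 : ν.mr (seq 0).1 = none := hr₀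
    have hμsome : ∀ n, ∃ hh, μ.mr (seq n).1 = some hh :=
      fun n => ⟨(seq n).2.choose, (seq n).2.choose_spec.1⟩
    have hinj : ∀ m n, (seq m).1 = (seq n).1 → m = n := by
      intro m
      induction m with
      | zero =>
        intro n he
        cases n with
        | zero => rfl
        | succ k =>
          obtain ⟨hh, hk⟩ := hμsome k
          have h1 := hseq k
          rw [← he, hseq0, hk] at h1
          cases h1
      | succ j ih =>
        intro n he
        cases n with
        | zero =>
          obtain ⟨hh, hj⟩ := hμsome j
          have h1 := hseq j
          rw [he, hseq0] at h1
          rw [hj] at h1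
          cases h1
        | succ k =>
          obtain ⟨hh, hj⟩ := hμsome j
          have h1 := hseq j
          have h2 := hseq k
          rw [he] at h1
          have h3 : μ.mr (seq k).1 = μ.mr (seq j).1 := h2.symm.trans h1
          have h4 : (seq k).1 = (seq j).1 := μinj _ _ hh (h3.trans hj) hj
          rw [ih k h4.symm]
    obtain ⟨m, n, hmn, he⟩ := Finite.exists_ne_map_eq_of_infinite (fun n => (seq n).1)
    exact hmn (hinj m n he)
  -- every hospital is matched in ν
  have hHperf : ∀ h, ν.mh h ≠ none := by
    have hfsome : ∀ r, ∃ h, ν.mr r = some h := fun r => Option.ne_none_iff_exists'.1 (hRperf r)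
    have hfinj : Function.Injective (fun r => (hfsome r).choose) := by
      intro a b he
      have ha := (ν.consistent a _).1 (hfsome a).choose_spec
      have hb := (ν.consistent b _).1 (hfsome b).choose_spec
      simp only at he
      rw [he] at ha
      exact Option.some_inj.1 (ha.symm.trans hb)
    have hfsurj : Function.Surjective (fun r => (hfsome r).choose) :=
      ((Fintype.bijective_iff_injective_and_card _).2 ⟨hfinj, hcard⟩).2
    intro h
    obtain ⟨r, hr⟩ := hfsurj h
    have hr' : ν.mr r = some h := by
      have := (hfsome r).choose_spec
      simp only at hr
      rw [this, hr]
    rw [(ν.consistent r h).1 hr']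
    simp
  -- stability of ν in I
  refine ⟨⟨hRperf, hHperf⟩, ⟨⟨fun r h _ => hCr r h, fun h r _ => hCh h r⟩, ?_⟩⟩
  rintro r h ⟨⟨hm1, hp1⟩, ⟨hm2, hp2⟩⟩
  obtain ⟨r'', hνh⟩ : ∃ r'', ν.mh h = some r'' := Option.ne_none_iff_exists'.1 (hHperf h)
  have hr''In : r'' ∈ Ihat.Lh h := hνEh h r'' hνh
  have hlt2 : (I.Lh h).idxOf r < (I.Lh h).idxOf r'' := hp2 r'' hνh
  by_cases hr : r ∈ Ihat.Lh h
  · refine hνB r h ⟨⟨hmemLr r h hr, fun y hy =>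
      hIdxr r h y (hmemLr r h hr) (hνEr r y hy) (hp1 y hy)⟩, ⟨hr, fun y hy => ?_⟩⟩
    rw [hνh] at hy; cases hy
    rw [hIdxh h r hr, hIdxh h r'' hr''In]
    exact hlt2
  · have h1 : (I.Lh h).idxOf r'' < ρ h := by
      have h2 := hr''In
      rw [hLh] at h2
      exact indexOf_lt_of_mem_take h2
    have h2 : ρ h ≤ (I.Lh h).idxOf r := by
      apply le_indexOf_of_not_mem_take (hCh h r)
      rw [← hLh]; exact hr
    omega
end

section
/- Rural Hospitals (Lone-Wolf) Theorem: In any stable matching instance with strict (possibly incomplete) preference lists, if an agent is unmatched in some stable matching, then that agent is unmatched in every stable matching. -/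
variable {R H : Type*} [DecidableEq R] [DecidableEq H]

section RuralAux

variable {R H : Type*} [DecidableEq R] [DecidableEq H]

private lemma idx_lt {α : Type*} [DecidableEq α] {l : List α} {x y : α}
    (hx : x ∈ l) (hy : y ∈ l) (hle : l.idxOf x ≤ l.idxOf y) (hne : x ≠ y) :
    l.idxOf x < l.idxOf y :=
  lt_of_le_of_ne hle (fun h => hne ((List.idxOf_inj hx).mp h))

/-- Key lemma: if `r` is unmatched in stable `ν` then `r` is unmatched in stable `μ`. -/
private lemma key [Finite R]
    (I : SMInstance R H) (μ ν : SMatching R H)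
    (hμ : I.IsStable μ) (hν : I.IsStable ν)
    (r0 : R) (hr0 : ν.mr r0 = none) : μ.mr r0 = none := by
  by_contra hmr
  obtain ⟨h1, hh1⟩ := Option.ne_none_iff_exists'.mp hmr
  -- Good r' (r, h) : ν-partner of h is r, μ-partner of h is r', and h prefers r to r'.
  set Good : R → R × H → Prop := fun r' p =>
    ν.mh p.2 = some p.1 ∧ μ.mh p.2 = some r' ∧
      (I.Lh p.2).idxOf p.1 < (I.Lh p.2).idxOf r' with hGood
  -- base step
  have hμh1 : μ.mh h1 = some r0 := (μ.consistent r0 h1).mp hh1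
  have base : ∃ p, Good r0 p := by
    have hnb := hν.2 r0 h1
    rw [SMInstance.Blocking] at hnb
    push_neg at hnb
    have hpr : prefersOver (I.Lr r0) h1 (ν.mr r0) := by
      refine ⟨hμ.1.1 r0 h1 hh1, fun y hy => ?_⟩
      rw [hr0] at hy; exact absurd hy (by simp)
    have := hnb hpr
    rw [prefersOver] at this
    push_neg at this
    obtain ⟨r1, hr1, hidx⟩ := this (hμ.1.2 h1 r0 hμh1)
    have hne : r1 ≠ r0 := by
      rintro rfl
      rw [(ν.consistent r1 h1).mpr hr1] at hr0; simp at hr0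
    refine ⟨(r1, h1), hr1, hμh1, ?_⟩
    exact idx_lt (hν.1.2 h1 r1 hr1) (hμ.1.2 h1 r0 hμh1) hidx hne
  -- inductive step
  have step : ∀ r' p, Good r' p → ∃ q, Good p.1 q := by
    rintro r' ⟨r, h⟩ ⟨hν1, hμ1, hlt⟩
    dsimp only at hν1 hμ1 hlt
    have hrh : ν.mr r = some h := (ν.consistent r h).mpr hν1
    have hrne : r ≠ r' := fun e => by subst e; exact lt_irrefl _ hlt
    -- (r, h) doesn't block μ, but h prefers r to its μ-partner r', so r has a
    -- μ-partner h2 it prefers to h.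
    have hnb := hμ.2 r h
    rw [SMInstance.Blocking] at hnb
    push_neg at hnb
    have hpr2 : prefersOver (I.Lh h) r (μ.mh h) := by
      refine ⟨hν.1.2 h r hν1, fun y hy => ?_⟩
      rw [hμ1, Option.some.injEq] at hy; exact hy ▸ hlt
    have hnpr : ¬ prefersOver (I.Lr r) h (μ.mr r) := fun c => hnb c hpr2
    rw [prefersOver] at hnpr
    push_neg at hnpr
    obtain ⟨h2, hh2, hidx2⟩ := hnpr (hν.1.1 r h hrh)
    have hh2ne : h2 ≠ h := by
      rintro rfl
      rw [(μ.consistent r h2).mp hh2] at hμ1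
      exact hrne (Option.some.inj hμ1)
    have hidx2' : (I.Lr r).idxOf h2 < (I.Lr r).idxOf h :=
      idx_lt (hμ.1.1 r h2 hh2) (hν.1.1 r h hrh) hidx2 hh2ne
    -- (r, h2) doesn't block ν, but r prefers h2 to h = ν(r), so h2 has a
    -- ν-partner r2 it prefers to r.
    have hμh2 : μ.mh h2 = some r := (μ.consistent r h2).mp hh2
    have hnb2 := hν.2 r h2
    rw [SMInstance.Blocking] at hnb2
    push_neg at hnb2
    have hpr3 : prefersOver (I.Lr r) h2 (ν.mr r) := by
      refine ⟨hμ.1.1 r h2 hh2, fun y hy => ?_⟩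
      rw [hrh, Option.some.injEq] at hy; exact hy ▸ hidx2'
    have hnpr2 := hnb2 hpr3
    rw [prefersOver] at hnpr2
    push_neg at hnpr2
    obtain ⟨r2, hr2, hidx3⟩ := hnpr2 (hμ.1.2 h2 r hμh2)
    have hr2ne : r2 ≠ r := by
      rintro rfl
      rw [(ν.consistent r2 h2).mpr hr2] at hrh
      exact hh2ne (Option.some.inj hrh)
    exact ⟨(r2, h2), hr2, hμh2,
      idx_lt (hν.1.2 h2 r2 hr2) (hμ.1.2 h2 r hμh2) hidx3 hr2ne⟩
  -- build the infinite sequence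
  let T := {x : R × (R × H) // Good x.1 x.2}
  let stepT : T → T := fun x =>
    ⟨(x.1.2.1, Classical.choose (step x.1.1 x.1.2 x.2)),
      Classical.choose_spec (step x.1.1 x.1.2 x.2)⟩
  let seq : ℕ → T := fun n => stepT^[n] ⟨(r0, Classical.choose base), Classical.choose_spec base⟩
  have seq_succ : ∀ n, seq (n + 1) = stepT (seq n) := fun n => by
    simp only [seq, Function.iterate_succ_apply']
  have fst_succ : ∀ n, (seq (n + 1)).1.1 = (seq n).1.2.1 := by
    intro n
    rw [seq_succ n]
  -- f n = n-th resident on the path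
  let f : ℕ → R := fun n => (seq n).1.1
  have hf0 : f 0 = r0 := rfl
  have hGoodn : ∀ n, Good (f n) (seq n).1.2 := fun n => (seq n).2
  have hfν : ∀ n, ν.mr (f (n + 1)) = some (seq n).1.2.2 := by
    intro n
    have := (hGoodn n).1
    rw [← fst_succ n] at this
    exact (ν.consistent _ _).mpr this
  have hinj : Function.Injective f := by
    intro i j hij
    induction i generalizing j with
    | zero =>
      cases j with
      | zero => rfl
      | succ j =>
        exfalso
        have := hfν j
        rw [← hij, hf0, hr0] at this
        simp at this
    | succ i ih =>
      cases j with
      | zero =>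
        exfalso
        have := hfν i
        rw [hij, hf0, hr0] at this
        simp at this
      | succ j =>
        have hhs : (seq i).1.2.2 = (seq j).1.2.2 := by
          have h1 := hfν i
          have h2 := hfν j
          rw [hij] at h1
          rw [h1] at h2
          exact Option.some.inj h2
        have h1 := (hGoodn i).2.1
        have h2 := (hGoodn j).2.1
        rw [hhs] at h1
        rw [h1] at h2
        exact congrArg (· + 1) (ih (Option.some.inj h2))
  exact not_injective_infinite_finite f hinj

/-- Dual instance and matching, to transfer the result to the hospital side. -/
private def SMInstance.dual (I : SMInstance R H) : SMInstance H R := ⟨I.Lh, I.Lr⟩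

private def SMatching.dual (μ : SMatching R H) : SMatching H R :=
  ⟨μ.mh, μ.mr, fun h r => (μ.consistent r h).symm⟩

private lemma dual_stable (I : SMInstance R H) (μ : SMatching R H)
    (hμ : I.IsStable μ) : I.dual.IsStable μ.dual := by
  obtain ⟨⟨he1, he2⟩, hb⟩ := hμ
  exact ⟨⟨he2, he1⟩, fun h r hc => hb r h ⟨hc.2, hc.1⟩⟩

end RuralAux

/-- **Rural Hospitals / Lone-Wolf Theorem.** In any stable matching instance
with strict (possibly incomplete) preference lists, an agent unmatched in some stable
matching is unmatched in every stable matching. -/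
theorem rural_hospitals
    {R H : Type*} [DecidableEq R] [DecidableEq H] [Fintype R] [Fintype H]
    (I : SMInstance R H) (hN : I.Nodups)
    (μ ν : SMatching R H) (hμ : I.IsStable μ) (hν : I.IsStable ν) :
    (∀ r, μ.mr r = none → ν.mr r = none) ∧ (∀ h, μ.mh h = none → ν.mh h = none) := by
  constructor
  · intro r h
    exact key I ν μ hν hμ r h
  · intro h hh
    exact key I.dual ν.dual μ.dual (dual_stable I ν hν) (dual_stable I μ hμ) h hh
end

section
/- There exists a stable matching instance with 4 residents and 4 hospitals having a unique stable matching μ, together with windows of radius 1 around each hospital's rank of its μ-partner, such that running hospital-proposing deferred acceptance where each hospital proposes only to residents inside its window produces a matching with a blocking pair in the original instance. -/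
/-- One step of deferred acceptance with proposers' lists `Lp` and receivers' lists `Lq`.
The state consists of, for each proposer, the index of its next proposal, and, for each
receiver, its tentatively held proposer.  An unmatched proposer with proposals remaining
proposes to the next entry of its list; the receiver keeps the better of its tentative
partner and the new proposer. -/
def daStep (n : ℕ) (Lp Lq : Fin n → List (Fin n))
    (s : (Fin n → ℕ) × (Fin n → Option (Fin n))) :
    (Fin n → ℕ) × (Fin n → Option (Fin n)) :=
  match (List.finRange n).find?
      (fun p => decide ((∀ q, s.2 q ≠ some p) ∧ s.1 p < (Lp p).length)) with
  | none => s
  | some p =>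
    match (Lp p)[s.1 p]? with
    | none => s
    | some q =>
      let next' := Function.update s.1 p (s.1 p + 1)
      match s.2 q with
      | none => (next', Function.update s.2 q (some p))
      | some p' =>
        if (Lq q).idxOf p < (Lq q).idxOf p' then
          (next', Function.update s.2 q (some p))
        else (next', s.2)

/-- Run `k` steps of deferred acceptance from the initial state. -/
def daRun (n : ℕ) (Lp Lq : Fin n → List (Fin n)) :
    ℕ → (Fin n → ℕ) × (Fin n → Option (Fin n))
  | 0 => (fun _ => 0, fun _ => none)
  | k + 1 => daStep n Lp Lq (daRun n Lp Lq k)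

/-- The partner of proposer `p` induced by the receivers' held proposers. -/
def partnerOf (n : ℕ) (held : Fin n → Option (Fin n)) (p : Fin n) : Option (Fin n) :=
  (List.finRange n).find? (fun q => held q == some p)

/-- `(r, h)` is a blocking pair with respect to the partner functions `mr`, `mh`. -/
def Blocking {n : ℕ} (Lr Lh : Fin n → List (Fin n))
    (mr mh : Fin n → Option (Fin n)) (r h : Fin n) : Prop :=
  prefersOver (Lr r) h (mr r) ∧ prefersOver (Lh h) r (mh h)

/-- A perfect matching `μ` (resident → hospital) with inverse `ν` is stable for complete
lists: no pair ranks each other above their assigned partners. -/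
def StableTM {n : ℕ} (Lr Lh : Fin n → List (Fin n)) (μ ν : Fin n → Fin n) : Prop :=
  ∀ r h, ¬ ((Lr r).idxOf h < (Lr r).idxOf (μ r) ∧ (Lh h).idxOf r < (Lh h).idxOf (ν h))

instance {α : Type*} [DecidableEq α] (l : List α) (x : α) (o : Option α) :
    Decidable (prefersOver l x o) :=
  decidable_of_iff (x ∈ l ∧ ∀ y ∈ o, l.idxOf x < l.idxOf y) (by
    unfold prefersOver
    constructor
    · rintro ⟨h1, h2⟩; exact ⟨h1, fun y hy => h2 y hy⟩
    · rintro ⟨h1, h2⟩; exact ⟨h1, fun y hy => h2 y hy⟩)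

instance {n : ℕ} (Lr Lh : Fin n → List (Fin n)) (mr mh : Fin n → Option (Fin n))
    (r h : Fin n) : Decidable (Blocking Lr Lh mr mh r h) := by
  unfold Blocking; infer_instance

instance {n : ℕ} (Lr Lh : Fin n → List (Fin n)) (μ ν : Fin n → Fin n) :
    Decidable (StableTM Lr Lh μ ν) := by
  unfold StableTM; infer_instance

set_option maxRecDepth 10000 in
lemma key_unique : ∀ e : Equiv.Perm (Fin 4),
    StableTM ![[0,3,1,2],[3,2,0,1],[0,2,1,3],[0,3,1,2]]
      ![[1,2,0,3],[2,1,0,3],[3,0,2,1],[2,1,3,0]] ⇑e ⇑e.symm →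
    ⇑e = ![1,3,0,2] := by decide

set_option maxRecDepth 40000 in
set_option maxHeartbeats 2000000 in
/-- There is a 4×4 instance with a unique stable matching `μ` such that
hospital-proposing deferred acceptance, where each hospital proposes only within the
window of radius 1 around the rank of its `μ`-partner, outputs a matching admitting a
blocking pair in the original instance. -/
theorem hospital_proposing_window_DA_can_be_unstable :
    ∃ (Lr Lh : Fin 4 → List (Fin 4)) (μ ν : Fin 4 → Fin 4),
      (∀ r, (Lr r).Nodup) ∧ (∀ h, (Lh h).Nodup) ∧
      (∀ r h, h ∈ Lr r) ∧ (∀ h r, r ∈ Lh h) ∧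
      (∀ r h, μ r = h ↔ ν h = r) ∧
      StableTM Lr Lh μ ν ∧
      (∀ μ' ν' : Fin 4 → Fin 4, (∀ r h, μ' r = h ↔ ν' h = r) →
        StableTM Lr Lh μ' ν' → μ' = μ) ∧
      (let win : Fin 4 → List (Fin 4) := fun h =>
        ((Lh h).drop ((Lh h).idxOf (ν h) - 1)).take
          (((Lh h).idxOf (ν h) + 2) - ((Lh h).idxOf (ν h) - 1))
       -- hospitals propose (using their windows); residents receive and judge by `Lr`
       let held := (daRun 4 win Lr 100).2
       ∃ r h, Blocking Lr Lh held (partnerOf 4 held) r h) := by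
  refine ⟨![[0,3,1,2],[3,2,0,1],[0,2,1,3],[0,3,1,2]],
    ![[1,2,0,3],[2,1,0,3],[3,0,2,1],[2,1,3,0]],
    ![1,3,0,2], ![2,0,3,1], ?_, ?_, ?_, ?_, ?_, ?_, ?_, ?_⟩
  · decide
  · decide
  · decide
  · decide
  · decide
  · decide
  · intro μ' ν' hinv hst
    have h1 : ∀ r, ν' (μ' r) = r := fun r => (hinv r (μ' r)).mp rfl
    have h2 : ∀ h, μ' (ν' h) = h := fun h => (hinv (ν' h) h).mpr rfl
    exact key_unique ⟨μ', ν', h1, h2⟩ hst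
  · decide
end

section
/- Proposer-optimality of deferred acceptance: In any stable matching instance, the resident-proposing deferred acceptance algorithm terminates and outputs a stable matching μ_R such that for every resident r and every stable matching μ, r weakly prefers μ_R(r) to μ(r). -/
lemma myIndexOf_getElem {α : Type*} [DecidableEq α] {l : List α} (hn : l.Nodup)
    {i : ℕ} (h : i < l.length) : l.idxOf l[i] = i := by
  have hm : l[i] ∈ l := List.getElem_mem h
  have hlen : l.idxOf l[i] < l.length := List.idxOf_lt_length_iff.mpr hm
  have := List.idxOf_get (a := l[i]) (l := l) hlen
  rw [List.get_eq_getElem] at this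
  exact (hn.getElem_inj_iff).mp this

lemma myIndexOf_strict {α : Type*} [DecidableEq α] {l : List α} {a b : α}
    (ha : a ∈ l) (hb : b ∈ l) (hab : a ≠ b)
    (hle : l.idxOf a ≤ l.idxOf b) : l.idxOf a < l.idxOf b := by
  refine lt_of_le_of_ne hle (fun he => hab ?_)
  have h1 := List.idxOf_get (List.idxOf_lt_length_iff.mpr ha)
  have h2 := List.idxOf_get (List.idxOf_lt_length_iff.mpr hb)
  rw [List.get_eq_getElem] at h1 h2
  rw [← h1, ← h2]
  congr 1

lemma myMem_of_getElem? {α : Type*} {l : List α} {i : ℕ} {a : α}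
    (h : l[i]? = some a) : a ∈ l := by
  have := List.getElem?_eq_some_iff.mp h
  obtain ⟨hlt, rfl⟩ := this
  exact List.getElem_mem hlt

lemma daStep_spec (n : ℕ) (Lp Lq : Fin n → List (Fin n))
    (s : (Fin n → ℕ) × (Fin n → Option (Fin n))) :
    (daStep n Lp Lq s = s ∧ ∀ p, (∀ h, s.2 h ≠ some p) → (Lp p).length ≤ s.1 p) ∨
    ∃ p q w, (∀ h, s.2 h ≠ some p) ∧ s.1 p < (Lp p).length ∧
      (Lp p)[s.1 p]? = some q ∧
      (w = p ∨ s.2 q = some w) ∧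
      (Lq q).idxOf w ≤ (Lq q).idxOf p ∧
      (∀ p', s.2 q = some p' → (Lq q).idxOf w ≤ (Lq q).idxOf p') ∧
      daStep n Lp Lq s =
        (Function.update s.1 p (s.1 p + 1), Function.update s.2 q (some w)) := by
  unfold daStep
  split
  next hf =>
    left
    refine ⟨rfl, fun p hp => ?_⟩
    have := List.find?_eq_none.mp hf p (List.mem_finRange p)
    simp at this
    exact this hp
  next p hf =>
    have hpred := List.find?_some hf
    simp at hpred
    obtain ⟨hun, hlt⟩ := hpred
    split
    next hget =>
      exact absurd (List.getElem?_eq_getElem hlt) (by rw [hget]; simp)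
    next q hget =>
      right
      split
      next hh =>
        exact ⟨p, q, p, hun, hlt, hget, Or.inl rfl, le_refl _,
          (fun p' hp' => by rw [hh] at hp'; cases hp'), rfl⟩
      next p' hh =>
        split
        next hcmp =>
          exact ⟨p, q, p, hun, hlt, hget, Or.inl rfl, le_refl _,
            (fun p'' hp'' => by rw [hh] at hp''; cases hp''; exact le_of_lt hcmp), rfl⟩
        next hcmp =>
          refine ⟨p, q, p', hun, hlt, hget, Or.inr hh, le_of_not_gt hcmp,
            (fun p'' hp'' => by rw [hh] at hp''; cases hp''; exact le_refl _), ?_⟩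
          have : Function.update s.2 q (some p') = s.2 := by
            rw [← hh]; exact Function.update_eq_self q s.2
          rw [this]

def DAInv (n : ℕ) (Lr Lh : Fin n → List (Fin n))
    (s : (Fin n → ℕ) × (Fin n → Option (Fin n))) : Prop :=
  (∀ r, s.1 r ≤ (Lr r).length) ∧
  (∀ h r, s.2 h = some r → h ∈ Lr r ∧ (Lr r).idxOf h < s.1 r) ∧
  (∀ h h' r, s.2 h = some r → s.2 h' = some r → h = h') ∧
  (∀ r h, h ∈ Lr r → (Lr r).idxOf h < s.1 r →
    ∃ r', s.2 h = some r' ∧ (Lh h).idxOf r' ≤ (Lh h).idxOf r)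

lemma DAInv_step (n : ℕ) (Lr Lh : Fin n → List (Fin n))
    (hNr : ∀ r, (Lr r).Nodup)
    (s : (Fin n → ℕ) × (Fin n → Option (Fin n)))
    (hinv : DAInv n Lr Lh s) : DAInv n Lr Lh (daStep n Lr Lh s) := by
  rcases daStep_spec n Lr Lh s with ⟨heq, _⟩ | ⟨p, q, w, hun, hlt, hget, hw, hwp, hwmin, heq⟩
  · rw [heq]; exact hinv
  obtain ⟨A, B, C, D⟩ := hinv
  rw [heq]
  have hqe : (Lr p)[s.1 p] = q := by
    have := (List.getElem?_eq_getElem hlt).symm.trans hget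
    exact Option.some.inj this
  have hqm : q ∈ Lr p := myMem_of_getElem? hget
  have hidxq : (Lr p).idxOf q = s.1 p := by rw [← hqe]; exact myIndexOf_getElem (hNr p) hlt
  refine ⟨?_, ?_, ?_, ?_⟩ <;> dsimp only
  · intro r
    by_cases hrp : r = p
    · subst hrp; simpa using hlt
    · rw [Function.update_of_ne hrp]; exact A r
  · intro h r hh
    by_cases hhq : h = q
    · subst hhq
      rw [Function.update_self] at hh
      cases hh
      rcases hw with rfl | hwq
      · refine ⟨hqm, ?_⟩
        rw [hidxq, Function.update_self]
        omega
      · obtain ⟨hm, hi⟩ := B h w hwq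
        refine ⟨hm, lt_of_lt_of_le hi ?_⟩
        by_cases hwp' : w = p
        · subst hwp'; rw [Function.update_self]; omega
        · rw [Function.update_of_ne hwp']
    · rw [Function.update_of_ne hhq] at hh
      obtain ⟨hm, hi⟩ := B h r hh
      refine ⟨hm, lt_of_lt_of_le hi ?_⟩
      by_cases hrp : r = p
      · subst hrp; rw [Function.update_self]; omega
      · rw [Function.update_of_ne hrp]
  · intro h h' r hh hh'
    by_cases hhq : h = q <;> by_cases hhq' : h' = q
    · rw [hhq, hhq']
    · exfalso
      subst hhq
      rw [Function.update_self] at hh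
      rw [Function.update_of_ne hhq'] at hh'
      cases hh
      rcases hw with rfl | hwq
      · exact hun h' hh'
      · exact hhq' (C h' h w hh' hwq)
    · exfalso
      subst hhq'
      rw [Function.update_self] at hh'
      rw [Function.update_of_ne hhq] at hh
      cases hh'
      rcases hw with rfl | hwq
      · exact hun h hh
      · exact hhq (C h h' w hh hwq)
    · rw [Function.update_of_ne hhq] at hh
      rw [Function.update_of_ne hhq'] at hh'
      exact C h h' r hh hh'
  · intro r h hm hidx
    have hnext : ∀ r', s.1 r' ≤ Function.update s.1 p (s.1 p + 1) r' := by
      intro r'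
      by_cases hr' : r' = p
      · subst hr'; rw [Function.update_self]; omega
      · rw [Function.update_of_ne hr']
    by_cases hold : (Lr r).idxOf h < s.1 r
    · obtain ⟨r', hr', hle⟩ := D r h hm hold
      by_cases hhq : h = q
      · subst hhq
        rw [Function.update_self]
        exact ⟨w, rfl, le_trans (hwmin r' hr') hle⟩
      · rw [Function.update_of_ne hhq]
        exact ⟨r', hr', hle⟩
    · have hrp : r = p := by
        by_contra hrp
        rw [Function.update_of_ne hrp] at hidx
        exact hold hidx
      subst hrp
      rw [Function.update_self] at hidx
      have hie : (Lr r).idxOf h = s.1 r := by omega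
      have hhq : h = q := by
        have h1 : (Lr r)[(Lr r).idxOf h]'(List.idxOf_lt_length_iff.mpr hm) = h := by
          have := List.idxOf_get (List.idxOf_lt_length_iff.mpr hm)
          rwa [List.get_eq_getElem] at this
        rw [← h1]
        simp_rw [hie]
        exact hqe
      subst hhq
      rw [Function.update_self]
      exact ⟨w, rfl, hwp⟩

lemma DAInv_run (n : ℕ) (Lr Lh : Fin n → List (Fin n))
    (hNr : ∀ r, (Lr r).Nodup) :
    ∀ k, DAInv n Lr Lh (daRun n Lr Lh k) := by
  intro k
  induction k with
  | zero =>
    refine ⟨fun r => Nat.zero_le _, fun h r hh => by simp [daRun] at hh,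
      fun h h' r hh => by simp [daRun] at hh, fun r h _ hidx => by simp [daRun] at hidx⟩
  | succ k ih => exact DAInv_step n Lr Lh hNr _ ih

lemma daStep_sum (n : ℕ) (Lr Lh : Fin n → List (Fin n))
    (s : (Fin n → ℕ) × (Fin n → Option (Fin n)))
    (hne : daStep n Lr Lh s ≠ s) :
    ∑ r : Fin n, (daStep n Lr Lh s).1 r = (∑ r : Fin n, s.1 r) + 1 := by
  rcases daStep_spec n Lr Lh s with ⟨heq, _⟩ | ⟨p, q, w, hun, hlt, hget, hw, hwp, hwmin, heq⟩
  · exact absurd heq hne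
  rw [heq]
  dsimp only
  rw [Finset.sum_update_of_mem (Finset.mem_univ p)]
  rw [← Finset.sum_erase_add Finset.univ s.1 (Finset.mem_univ p)]
  rw [Finset.sdiff_singleton_eq_erase]
  omega

lemma daRun_fix (n : ℕ) (Lr Lh : Fin n → List (Fin n)) :
    ∀ k, daStep n Lr Lh (daRun n Lr Lh k) = daRun n Lr Lh k ∨
      k ≤ ∑ r : Fin n, (daRun n Lr Lh k).1 r := by
  intro k
  induction k with
  | zero => right; exact Nat.zero_le _
  | succ k ih =>
    by_cases hf : daStep n Lr Lh (daRun n Lr Lh k) = daRun n Lr Lh k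
    · left
      have e : daRun n Lr Lh (k+1) = daStep n Lr Lh (daRun n Lr Lh k) := rfl
      rw [e, hf, hf]
    · right
      rcases ih with ih | ih
      · exact absurd ih hf
      show k + 1 ≤ ∑ r : Fin n, (daStep n Lr Lh (daRun n Lr Lh k)).1 r
      rw [daStep_sum n Lr Lh _ hf]
      omega

lemma partnerOf_some {n : ℕ} {held : Fin n → Option (Fin n)} {r x : Fin n}
    (h : partnerOf n held r = some x) : held x = some r := by
  have := List.find?_some h
  simpa using this

lemma partnerOf_none {n : ℕ} {held : Fin n → Option (Fin n)} {r : Fin n}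
    (h : partnerOf n held r = none) : ∀ q, held q ≠ some r := by
  intro q hq
  have := List.find?_eq_none.mp h q (List.mem_finRange q)
  simp [hq] at this

def DAInv5 {n : ℕ} (Lr : Fin n → List (Fin n)) (μr : Fin n → Option (Fin n))
    (s : (Fin n → ℕ) × (Fin n → Option (Fin n))) : Prop :=
  ∀ r h, μr r = some h → (Lr r).idxOf h < s.1 r → s.2 h = some r

lemma DAInv5_step (n : ℕ) (Lr Lh : Fin n → List (Fin n))
    (hNr : ∀ r, (Lr r).Nodup) (hcons : ∀ r h, h ∈ Lr r ↔ r ∈ Lh h)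
    (μr μh : Fin n → Option (Fin n))
    (hμ : ∀ r h, μr r = some h ↔ μh h = some r)
    (hμdom : ∀ r h, μr r = some h → h ∈ Lr r)
    (hstab : ∀ r h, ¬ Blocking Lr Lh μr μh r h)
    (s : (Fin n → ℕ) × (Fin n → Option (Fin n)))
    (hinv : DAInv n Lr Lh s) (h5 : DAInv5 Lr μr s) :
    DAInv5 Lr μr (daStep n Lr Lh s) := by
  rcases daStep_spec n Lr Lh s with ⟨heq, _⟩ | ⟨p, q, w, hun, hlt, hget, hw, hwp, hwmin, heq⟩
  · rw [heq]; exact h5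
  obtain ⟨A, B, C, D⟩ := hinv
  rw [heq]
  have hqe : (Lr p)[s.1 p] = q := by
    have := (List.getElem?_eq_getElem hlt).symm.trans hget
    exact Option.some.inj this
  have hqm : q ∈ Lr p := myMem_of_getElem? hget
  have hidxq : (Lr p).idxOf q = s.1 p := by rw [← hqe]; exact myIndexOf_getElem (hNr p) hlt
  have hpLh : p ∈ Lh q := (hcons p q).mp hqm
  intro r h hμr hidx
  dsimp only at hidx ⊢
  by_cases hrp : r = p
  · subst hrp
    rw [Function.update_self] at hidx
    by_cases hlt2 : (Lr r).idxOf h < s.1 r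
    · exact absurd (h5 r h hμr hlt2) (hun h)
    · have hhm : h ∈ Lr r := hμdom r h hμr
      have hhq : h = q := by
        have hie : (Lr r).idxOf h = s.1 r := by omega
        have h1 : (Lr r)[(Lr r).idxOf h]'(List.idxOf_lt_length_iff.mpr hhm) = h := by
          have := List.idxOf_get (List.idxOf_lt_length_iff.mpr hhm)
          rwa [List.get_eq_getElem] at this
        rw [← h1]
        simp_rw [hie]
        exact hqe
      subst hhq
      rw [Function.update_self]
      rcases hw with rfl | hwq
      · rfl
      exfalso
      have hwne : w ≠ r := fun he => hun h (he ▸ hwq)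
      obtain ⟨hwm, hwi⟩ := B h w hwq
      have hwLh : w ∈ Lh h := (hcons w h).mp hwm
      have hμhq : μh h = some r := (hμ r h).mp hμr
      have hlt3 : (Lh h).idxOf w < (Lh h).idxOf r := myIndexOf_strict hwLh hpLh hwne hwp
      apply hstab w h
      constructor
      · refine ⟨hwm, fun y hy => ?_⟩
        by_cases hyy : (Lr w).idxOf y < s.1 w
        · have hsy := h5 w y hy hyy
          have hyh : y = h := C y h w hsy hwq
          rw [hyh] at hy
          have h1 : μh h = some w := (hμ w h).mp hy
          rw [hμhq] at h1
          exact (hwne (Option.some.inj h1).symm).elim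
        · omega
      · refine ⟨hwLh, fun y hy => ?_⟩
        rw [hμhq] at hy
        cases hy
        exact hlt3
  · rw [Function.update_of_ne hrp] at hidx
    have hold := h5 r h hμr hidx
    by_cases hhq : h = q
    · subst hhq
      rw [Function.update_self]
      rcases hw with rfl | hwq
      · exfalso
        have hrm : r ∈ Lh h := (hcons r h).mp (hμdom r h hμr)
        have hle : (Lh h).idxOf w ≤ (Lh h).idxOf r := hwmin r hold
        have hne : w ≠ r := fun he => hrp he.symm
        have hlt3 : (Lh h).idxOf w < (Lh h).idxOf r := myIndexOf_strict hpLh hrm hne hle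
        have hμhq : μh h = some r := (hμ r h).mp hμr
        apply hstab w h
        constructor
        · refine ⟨hqm, fun y hy => ?_⟩
          by_cases hyy : (Lr w).idxOf y < s.1 w
          · exact absurd (h5 w y hy hyy) (hun y)
          · have hym : y ∈ Lr w := hμdom w y hy
            have hyq : y ≠ h := by
              intro he
              subst he
              have := (hμ w y).mp hy
              rw [hμhq] at this
              exact hne (Option.some.inj this).symm
            have : (Lr w).idxOf h ≤ (Lr w).idxOf y := by omega
            exact myIndexOf_strict hqm hym (Ne.symm hyq) this
        · refine ⟨hpLh, fun y hy => ?_⟩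
          rw [hμhq] at hy
          cases hy
          exact hlt3
      · rw [hold] at hwq
        exact hwq.symm
    · rw [Function.update_of_ne hhq]
      exact hold

lemma DAInv5_run (n : ℕ) (Lr Lh : Fin n → List (Fin n))
    (hNr : ∀ r, (Lr r).Nodup) (hcons : ∀ r h, h ∈ Lr r ↔ r ∈ Lh h)
    (μr μh : Fin n → Option (Fin n))
    (hμ : ∀ r h, μr r = some h ↔ μh h = some r)
    (hμdom : ∀ r h, μr r = some h → h ∈ Lr r)
    (hstab : ∀ r h, ¬ Blocking Lr Lh μr μh r h) :
    ∀ k, DAInv5 Lr μr (daRun n Lr Lh k) := by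
  intro k
  induction k with
  | zero => intro r h _ hidx; simp [daRun] at hidx
  | succ k ih =>
    exact DAInv5_step n Lr Lh hNr hcons μr μh hμ hμdom hstab _
      (DAInv_run n Lr Lh hNr k) ih

/-- **Proposer-optimality of deferred acceptance.** With enough fuel,
resident-proposing deferred acceptance terminates (the state is a fixed point), outputs a
stable matching, and every resident weakly prefers its output partner to its partner in
any stable matching. -/
theorem deferred_acceptance_proposer_optimal
    (n : ℕ) (Lr Lh : Fin n → List (Fin n))
    (hNr : ∀ r, (Lr r).Nodup) (hNh : ∀ h, (Lh h).Nodup)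
    (hcons : ∀ r h, h ∈ Lr r ↔ r ∈ Lh h) :
    let s := daRun n Lr Lh ((∑ r : Fin n, (Lr r).length) + 1)
    daStep n Lr Lh s = s ∧
    (∀ h r, s.2 h = some r → r ∈ Lh h) ∧
    (∀ r h, ¬ Blocking Lr Lh (partnerOf n s.2) s.2 r h) ∧
    (∀ μr μh : Fin n → Option (Fin n),
      (∀ r h, μr r = some h ↔ μh h = some r) →
      (∀ r h, μr r = some h → h ∈ Lr r) →
      (∀ r h, ¬ Blocking Lr Lh μr μh r h) →
      ∀ r, weaklyPrefers (Lr r) (partnerOf n s.2 r) (μr r)) := by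
  intro s
  have hsd : daRun n Lr Lh ((∑ r : Fin n, (Lr r).length) + 1) = s := rfl
  obtain ⟨A, B, C, D⟩ := DAInv_run n Lr Lh hNr ((∑ r : Fin n, (Lr r).length) + 1)
  rw [hsd] at A B C D
  have hfix : daStep n Lr Lh s = s := by
    rcases daRun_fix n Lr Lh ((∑ r : Fin n, (Lr r).length) + 1) with hf | hsum
    · rwa [hsd] at hf
    · exfalso
      rw [hsd] at hsum
      have h1 : ∑ r : Fin n, s.1 r ≤ ∑ r : Fin n, (Lr r).length :=
        Finset.sum_le_sum (fun r _ => A r)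
      omega
  have hfull : ∀ p, (∀ q, s.2 q ≠ some p) → (Lr p).length ≤ s.1 p := by
    rcases daStep_spec n Lr Lh s with ⟨_, hfl⟩ | ⟨p, q, w, hun, hlt, hget, hw, hwp, hwmin, heq⟩
    · exact hfl
    · exfalso
      rw [hfix] at heq
      have := congrFun (congrArg Prod.fst heq) p
      simp at this
  refine ⟨hfix, ?_, ?_, ?_⟩
  · intro h r hh
    exact (hcons r h).mp (B h r hh).1
  · rintro r h ⟨⟨hmem, hpr⟩, hmem2, hpr2⟩
    have hidx : (Lr r).idxOf h < s.1 r := by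
      cases hp : partnerOf n s.2 r with
      | none =>
        have hfl := hfull r (partnerOf_none hp)
        exact lt_of_lt_of_le (List.idxOf_lt_length_iff.mpr hmem) hfl
      | some x =>
        have hx := partnerOf_some hp
        have hxB := B x r hx
        have := hpr x hp
        omega
    obtain ⟨r', hr', hle⟩ := D r h hmem hidx
    have := hpr2 r' hr'
    omega
  · intro μr μh hμ hμdom hstab r
    have h5 := DAInv5_run n Lr Lh hNr hcons μr μh hμ hμdom hstab
      ((∑ r : Fin n, (Lr r).length) + 1)
    rw [hsd] at h5
    intro y hy
    cases hp : partnerOf n s.2 r with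
    | none =>
      exfalso
      have hunr := partnerOf_none hp
      have hfl := hfull r hunr
      have hym : y ∈ Lr r := hμdom r y hy
      have : (Lr r).idxOf y < s.1 r :=
        lt_of_lt_of_le (List.idxOf_lt_length_iff.mpr hym) hfl
      exact hunr y (h5 r y hy this)
    | some x =>
      have hx := partnerOf_some hp
      have hxB := B x r hx
      refine ⟨x, rfl, ?_⟩
      by_contra hlt'
      push_neg at hlt'
      have hylt : (Lr r).idxOf y < s.1 r := by omega
      have hsy := h5 r y hy hylt
      have : y = x := C y x r hsy hx
      rw [this] at hlt'
      omega
end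

section
/- Receiver-pessimality of deferred acceptance: In any stable matching instance, the resident-proposing deferred acceptance algorithm outputs the hospital-pessimal stable matching: for every hospital h and every stable matching μ, h weakly prefers μ(h) to μ_R(h), where μ_R is the resident-optimal stable matching. -/
variable {R H : Type*} [DecidableEq R] [DecidableEq H]

/-- **Receiver-pessimality.** If `μR` is the resident-optimal stable
matching, then for every hospital `h` and every stable matching `μ`, `h` weakly prefers
`μ(h)` to `μR(h)`. -/
theorem resident_optimal_is_hospital_pessimal
    {R H : Type*} [DecidableEq R] [DecidableEq H] [Fintype R] [Fintype H]
    (I : SMInstance R H) (hN : I.Nodups)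
    (μR : SMatching R H) (hstab : I.IsStable μR)
    (hopt : ∀ ν : SMatching R H, I.IsStable ν →
      ∀ r, weaklyPrefers (I.Lr r) (μR.mr r) (ν.mr r))
    (μ : SMatching R H) (hμ : I.IsStable μ) (h : H) :
    weaklyPrefers (I.Lh h) (μ.mh h) (μR.mh h) := by
  intro r hr
  have hrh : μR.mr r = some h := (μR.consistent r h).2 hr
  by_cases hcase : μ.mr r = some h
  · exact ⟨r, (μ.consistent r h).1 hcase, le_refl _⟩
  · -- r prefers h over its μ-partner, so (r,h) would block μ unless h is matched at least as well
    have hmem : h ∈ I.Lr r := hstab.1.1 r h hrh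
    have hpref : prefersOver (I.Lr r) h (μ.mr r) := by
      refine ⟨hmem, ?_⟩
      intro y hy
      obtain ⟨x, hx, hxy⟩ := hopt μ hμ r y hy
      rw [hrh] at hx
      have hxh : x = h := by injection hx.symm
      subst hxh
      have hymem : y ∈ I.Lr r := hμ.1.1 r y hy
      rcases lt_or_eq_of_le hxy with hlt | heq
      · exact hlt
      · exact absurd ((List.idxOf_inj (y := y) hmem).1 heq) (by
          intro e; exact hcase (e ▸ hy))
    have hnb := hμ.2 r h
    rw [SMInstance.Blocking] at hnb
    push_neg at hnb
    have := hnb hpref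
    rw [prefersOver] at this
    push_neg at this
    have hrmem : r ∈ I.Lh h := hstab.1.2 h r hr
    obtain ⟨y, hy, hle⟩ := this hrmem
    exact ⟨y, hy, hle⟩
end

section
/- WDA correctness: Let I be a stable matching instance with complete lists on both sides, μ a stable matching in I, and Î the instance obtained by truncating each hospital h's list to a contiguous window of its original list containing μ(h), with residents' lists restricted consistently. Then the resident-optimal stable matching μ̂ of Î is stable in I and matches all residents. -/
variable {R H : Type*} [DecidableEq R] [DecidableEq H]

section helpers
variable {α : Type*} [DecidableEq α]

lemma sublist_indexOf_lt {l' l : List α} (hs : List.Sublist l' l) (hl : l.Nodup) {x y : α}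
    (hx : x ∈ l') (hy : y ∈ l') (h : l'.idxOf x < l'.idxOf y) :
    l.idxOf x < l.idxOf y := by
  induction hs with
  | slnil => cases hx
  | cons a hs ih =>
    rename_i l₁ l₂
    have hna : a ∉ l₂ := (List.nodup_cons.mp hl).1
    have hxa : a ≠ x := fun e => hna (e ▸ hs.mem hx)
    have hya : a ≠ y := fun e => hna (e ▸ hs.mem hy)
    rw [List.idxOf_cons_ne _ hxa, List.idxOf_cons_ne _ hya]
    exact Nat.succ_lt_succ (ih (List.nodup_cons.mp hl).2 hx hy h)
  | cons_cons a hs ih =>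
    rename_i l₁ l₂
    have hna : a ∉ l₂ := (List.nodup_cons.mp hl).1
    by_cases hxa : a = x
    · subst hxa
      have hya : a ≠ y := by
        rintro rfl; simp at h
      rw [List.idxOf_cons_self, List.idxOf_cons_ne _ hya]
      exact Nat.succ_pos _
    · have hxl : x ∈ l₁ := by
        rcases List.mem_cons.mp hx with rfl | hxl
        · exact absurd rfl hxa
        · exact hxl
      have hya : a ≠ y := by
        rintro rfl
        rw [List.idxOf_cons_self] at h; omega
      have hyl : y ∈ l₁ := by
        rcases List.mem_cons.mp hy with rfl | hyl
        · exact absurd rfl hya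
        · exact hyl
      rw [List.idxOf_cons_ne _ hxa, List.idxOf_cons_ne _ hya] at h
      rw [List.idxOf_cons_ne _ hxa, List.idxOf_cons_ne _ hya]
      exact Nat.succ_lt_succ (ih (List.nodup_cons.mp hl).2 hxl hyl (Nat.lt_of_succ_lt_succ h))

lemma sublist_indexOf_lt' {l' l : List α} (hs : List.Sublist l' l) (hl : l.Nodup) {x y : α}
    (hx : x ∈ l') (hy : y ∈ l') (h : l.idxOf x < l.idxOf y) :
    l'.idxOf x < l'.idxOf y := by
  rcases lt_trichotomy (l'.idxOf x) (l'.idxOf y) with h' | h' | h'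
  · exact h'
  · exact absurd ((List.idxOf_inj hx).mp h' ▸ h) (lt_irrefl _)
  · exact absurd (sublist_indexOf_lt hs hl hy hx h') (by omega)

lemma mem_window_pos {l : List α} (hl : l.Nodup) {k n : ℕ} {x : α}
    (hx : x ∈ (l.drop k).take n) : k ≤ l.idxOf x ∧ l.idxOf x < k + n := by
  obtain ⟨i, hi, hget⟩ := List.getElem_of_mem hx
  have hi' : i < n := lt_of_lt_of_le hi (by simp [List.length_take])
  have hik : k + i < l.length := by
    have := hi; simp [List.length_take, List.length_drop] at this; omega
  have : l[k + i] = x := by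
    rw [← hget, List.getElem_take, List.getElem_drop]
  have := this ▸ List.Nodup.idxOf_getElem hl (k + i) hik
  omega

lemma mem_window_of_pos {l : List α} {k n : ℕ} {x : α} (hx : x ∈ l)
    (h1 : k ≤ l.idxOf x) (h2 : l.idxOf x < k + n) : x ∈ (l.drop k).take n := by
  set i := l.idxOf x with hi
  have hil : i < l.length := List.idxOf_lt_length_iff.mpr hx
  have hget : l[i]'hil = x := List.getElem_idxOf hil
  have hj : i - k < ((l.drop k).take n).length := by
    simp [List.length_take, List.length_drop]; omega
  have : ((l.drop k).take n)[i - k]? = some x := by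
    rw [List.getElem?_take, if_pos (by simp [List.length_take] at hj; omega), List.getElem?_drop]
    rw [show k + (i - k) = i by omega]
    rw [List.getElem?_eq_getElem hil, hget]
  exact List.mem_of_getElem? this
end helpers

section main

def SMatching.flipm {R H : Type*} (μ : SMatching R H) : SMatching H R :=
  ⟨μ.mh, μ.mr, fun h r => (μ.consistent r h).symm⟩

lemma all_matched_flip {R H : Type*} [Fintype R] [Fintype H]
    (hcard : Fintype.card R = Fintype.card H) (μ : SMatching R H)
    (hall : ∀ r, ∃ h, μ.mr r = some h) : ∀ h, ∃ r, μ.mh h = some r := by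
  choose g hg using hall
  have hginj : Function.Injective g := fun r1 r2 e => by
    have e1 := (μ.consistent r1 (g r1)).mp (hg r1)
    have e2 := (μ.consistent r2 (g r2)).mp (hg r2)
    rw [e] at e1; rw [e1] at e2; exact Option.some_inj.mp e2
  have hsurj := ((Fintype.bijective_iff_injective_and_card g).mpr ⟨hginj, hcard⟩).2
  intro h
  obtain ⟨r, hr⟩ := hsurj h
  exact ⟨r, hr ▸ (μ.consistent r (g r)).mp (hg r)⟩

lemma all_matched_flip' {R H : Type*} [Fintype R] [Fintype H]
    (hcard : Fintype.card R = Fintype.card H) (μ : SMatching R H)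
    (hall : ∀ h, ∃ r, μ.mh h = some r) : ∀ r, ∃ h, μ.mr r = some h :=
  all_matched_flip hcard.symm μ.flipm hall

lemma stable_perfect {R H : Type*} [DecidableEq R] [DecidableEq H] [Fintype R] [Fintype H]
    (hcard : Fintype.card R = Fintype.card H) (I : SMInstance R H) (hC : I.Complete)
    (μ : SMatching R H) (hμ : I.IsStable μ) :
    (∀ r, ∃ h, μ.mr r = some h) ∧ ∀ h, ∃ r, μ.mh h = some r := by
  have hres : ∀ r, ∃ h, μ.mr r = some h := by
    by_contra hcon
    push_neg at hcon
    obtain ⟨r, hr⟩ := hcon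
    have hrn : μ.mr r = none := by
      cases hmr : μ.mr r with
      | none => rfl
      | some h => exact absurd hmr (hr h)
    have hhos : ∃ h, μ.mh h = none := by
      by_contra hcon2
      push_neg at hcon2
      have hall : ∀ h, ∃ r, μ.mh h = some r := by
        intro h
        cases hmh : μ.mh h with
        | none => exact absurd hmh (hcon2 h)
        | some r' => exact ⟨r', rfl⟩
      obtain ⟨h, hh⟩ := all_matched_flip' hcard μ hall r
      exact hr h hh
    obtain ⟨h, hhn⟩ := hhos
    exact hμ.2 r h ⟨⟨hC.1 r h, fun y hy => by rw [hrn] at hy; cases hy⟩,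
                    ⟨hC.2 h r, fun y hy => by rw [hhn] at hy; cases hy⟩⟩
  exact ⟨hres, all_matched_flip hcard μ hres⟩

end main

/-- **WDA correctness.** If a stable matching `μ` of the complete-list
instance `I` survives in the window-truncated instance `Ihat`, then the resident-optimal
stable matching `muHat` of `Ihat` is stable in `I` and matches all residents. -/
theorem WDA_correct
    {R H : Type*} [DecidableEq R] [DecidableEq H] [Fintype R] [Fintype H]
    (hcard : Fintype.card R = Fintype.card H)
    (I Ihat : SMInstance R H) (hC : I.Complete) (hN : I.Nodups)
    (μ : SMatching R H) (hμ : I.IsStable μ)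
    (hwin : ∀ h, ∃ k l, Ihat.Lh h = ((I.Lh h).drop k).take l)
    (hsurv : ∀ h r, μ.mh h = some r → r ∈ Ihat.Lh h)
    (hLr : ∀ r, Ihat.Lr r = (I.Lr r).filter (fun h => decide (r ∈ Ihat.Lh h)))
    (muHat : SMatching R H) (hhat : Ihat.IsStable muHat)
    (hopt : ∀ ν : SMatching R H, Ihat.IsStable ν →
      ∀ r, weaklyPrefers (Ihat.Lr r) (muHat.mr r) (ν.mr r)) :
    I.IsStable muHat ∧ ∀ r, muHat.mr r ≠ none := by
  classical
  -- basic sublist facts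
  have hsubh : ∀ h, List.Sublist (Ihat.Lh h) (I.Lh h) := by
    intro h
    obtain ⟨k, n, hw⟩ := hwin h
    rw [hw]
    exact (List.take_sublist _ _).trans (List.drop_sublist _ _)
  have hsubr : ∀ r, List.Sublist (Ihat.Lr r) (I.Lr r) := by
    intro r; rw [hLr r]; exact List.filter_sublist
  have hmemIhatLr : ∀ r h, h ∈ Ihat.Lr r ↔ (h ∈ I.Lr r ∧ r ∈ Ihat.Lh h) := by
    intro r h; rw [hLr r]; simp [List.mem_filter]
  -- μ is perfect in I
  obtain ⟨hμR, hμH⟩ := stable_perfect hcard I hC μ hμ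
  -- μ is stable in Ihat
  have hμhat : Ihat.IsStable μ := by
    refine ⟨⟨?_, ?_⟩, ?_⟩
    · intro r h hrh
      exact (hmemIhatLr r h).mpr ⟨hC.1 r h, hsurv h r ((μ.consistent r h).mp hrh)⟩
    · exact hsurv
    · rintro r h ⟨⟨hmem1, hlt1⟩, hmem2, hlt2⟩
      apply hμ.2 r h
      refine ⟨⟨hC.1 r h, ?_⟩, ⟨hC.2 h r, ?_⟩⟩
      · intro y hy
        have hyI : y ∈ Ihat.Lr r :=
          (hmemIhatLr r y).mpr ⟨hC.1 r y, hsurv y r ((μ.consistent r y).mp hy)⟩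
        exact sublist_indexOf_lt (hsubr r) (hN.1 r) hmem1 hyI (hlt1 y hy)
      · intro y hy
        exact sublist_indexOf_lt (hsubh h) (hN.2 h) hmem2 (hsurv h y hy) (hlt2 y hy)
  -- muHat matches all residents
  have hmuHatR : ∀ r, ∃ h, muHat.mr r = some h := by
    intro r
    obtain ⟨h, hh⟩ := hμR r
    obtain ⟨x, hx, _⟩ := hopt μ hμhat r h hh
    exact ⟨x, hx⟩
  have hmuHatH : ∀ h, ∃ r, muHat.mh h = some r := all_matched_flip hcard muHat hmuHatR
  -- rank transfer for optimality, in the original instance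
  have hoptI : ∀ r x hr, muHat.mr r = some x → μ.mr r = some hr →
      (I.Lr r).idxOf x ≤ (I.Lr r).idxOf hr := by
    intro r x hr hx hhr
    obtain ⟨x', hx', hle⟩ := hopt μ hμhat r hr hhr
    rw [hx] at hx'
    obtain rfl : x = x' := Option.some_inj.mp hx'
    have hxmem : x ∈ Ihat.Lr r := hhat.1.1 r x hx
    have hrmem : hr ∈ Ihat.Lr r := hμhat.1.1 r hr hhr
    rcases lt_or_eq_of_le hle with hlt | heq
    · exact le_of_lt (sublist_indexOf_lt (hsubr r) (hN.1 r) hxmem hrmem hlt)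
    · rw [(List.idxOf_inj hxmem).mp heq]
  refine ⟨⟨⟨?_, ?_⟩, ?_⟩, ?_⟩
  · intro r h hrh
    exact (hsubr r).mem (hhat.1.1 r h hrh)
  · intro h r hhr
    exact (hsubh h).mem (hhat.1.2 h r hhr)
  · -- no blocking pair in I
    rintro r h ⟨⟨_, hlt1⟩, _, hlt2⟩
    obtain ⟨h₀, hh₀⟩ := hmuHatR r
    obtain ⟨r₀, hr₀⟩ := hmuHatH h
    have hltr : (I.Lr r).idxOf h < (I.Lr r).idxOf h₀ := hlt1 h₀ hh₀
    have hlth : (I.Lh h).idxOf r < (I.Lh h).idxOf r₀ := hlt2 r₀ hr₀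
    have hr₀mem : r₀ ∈ Ihat.Lh h := hhat.1.2 h r₀ hr₀
    obtain ⟨k, n, hw⟩ := hwin h
    by_cases hrw : r ∈ Ihat.Lh h
    · -- (r, h) blocks muHat in Ihat
      apply hhat.2 r h
      refine ⟨⟨(hmemIhatLr r h).mpr ⟨hC.1 r h, hrw⟩, ?_⟩, ⟨hrw, ?_⟩⟩
      · intro y hy
        have hyI : y ∈ Ihat.Lr r := hhat.1.1 r y hy
        exact sublist_indexOf_lt' (hsubr r) (hN.1 r)
          ((hmemIhatLr r h).mpr ⟨hC.1 r h, hrw⟩) hyI (hlt1 y hy)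
      · intro y hy
        exact sublist_indexOf_lt' (hsubh h) (hN.2 h) hrw (hhat.1.2 h y hy) (hlt2 y hy)
    · -- r is outside the window
      have hrI : r ∈ I.Lh h := hC.2 h r
      have hout : (I.Lh h).idxOf r < k ∨ k + n ≤ (I.Lh h).idxOf r := by
        by_contra hcon
        push_neg at hcon
        exact hrw (hw ▸ mem_window_of_pos hrI hcon.1 hcon.2)
      have hr₀pos := mem_window_pos (hN.2 h) (hw ▸ hr₀mem)
      rcases hout with hlo | hhi
      · -- r before the window: (r, h) blocks μ in I
        obtain ⟨rμ, hrμ⟩ := hμH h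
        obtain ⟨hμr, hhμr⟩ := hμR r
        have hrμpos := mem_window_pos (hN.2 h) (hw ▸ hsurv h rμ hrμ)
        have h1 : (I.Lr r).idxOf h₀ ≤ (I.Lr r).idxOf hμr := hoptI r h₀ hμr hh₀ hhμr
        apply hμ.2 r h
        refine ⟨⟨hC.1 r h, fun y hy => ?_⟩, ⟨hC.2 h r, fun y hy => ?_⟩⟩
        · rw [hhμr] at hy
          obtain rfl : hμr = y := Option.some_inj.mp hy
          omega
        · rw [hrμ] at hy
          obtain rfl : rμ = y := Option.some_inj.mp hy
          omega
      · -- r after the window: contradicts hlth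
        omega
  · intro r
    obtain ⟨h, hh⟩ := hmuHatR r
    simp [hh]
end

section
/- If no hospital is under-predicted in the prefix truncation (i.e., each hospital's hospital-optimal stable partner survives on its truncated list), then the hospital-optimal stable matching μ*_H of I exists in the truncated instance Î, and hence resident-proposing deferred acceptance on Î matches every agent and yields a matching stable in I. -/
variable {R H : Type*} [DecidableEq R] [DecidableEq H]

lemma pair_sublist_idxOf {α : Type*} [DecidableEq α] :
    ∀ {l : List α}, l.Nodup → ∀ {a b : α}, List.Sublist [a, b] l → l.idxOf a < l.idxOf b
  | [], _, _, _, h => by simp at h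
  | c :: t, hl, a, b, h => by
    cases h with
    | cons _ h' =>
      have ha : a ∈ t := h'.subset (by simp)
      have hb : b ∈ t := h'.subset (by simp)
      have hc := (List.nodup_cons.mp hl).1
      rw [List.idxOf_cons_ne _ (by rintro rfl; exact hc ha),
          List.idxOf_cons_ne _ (by rintro rfl; exact hc hb)]
      exact Nat.succ_lt_succ (pair_sublist_idxOf (List.nodup_cons.mp hl).2 h')
    | cons_cons _ h' =>
      have hb : b ∈ t := h'.subset (by simp)
      rw [List.idxOf_cons_self,
          List.idxOf_cons_ne _ (by rintro rfl; exact (List.nodup_cons.mp hl).1 hb)]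
      exact Nat.succ_pos _

lemma idxOf_lt_pair_sublist {α : Type*} [DecidableEq α] :
    ∀ {l : List α} {a b : α}, a ∈ l → b ∈ l → l.idxOf a < l.idxOf b →
      List.Sublist [a, b] l
  | [], a, b, ha, _, _ => by simp at ha
  | c :: t, a, b, ha, hb, h => by
    by_cases hac : a = c
    · subst hac
      have hba : b ≠ a := by rintro rfl; exact absurd h (lt_irrefl _)
      have hbt : b ∈ t := by
        rcases List.mem_cons.mp hb with h1 | h1
        · exact absurd h1 hba
        · exact h1
      exact (List.singleton_sublist.mpr hbt).cons_cons a
    · have hbc : b ≠ c := by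
        rintro rfl
        rw [List.idxOf_cons_self] at h; omega
      rw [List.idxOf_cons_ne _ (Ne.symm hac), List.idxOf_cons_ne _ (Ne.symm hbc)] at h
      have hat : a ∈ t := (List.mem_cons.mp ha).resolve_left hac
      have hbt : b ∈ t := (List.mem_cons.mp hb).resolve_left hbc
      exact (idxOf_lt_pair_sublist hat hbt (Nat.lt_of_succ_lt_succ h)).cons c

lemma sublist_idxOf_lt {α : Type*} [DecidableEq α] {l' l : List α} (hs : List.Sublist l' l)
    (hl : l.Nodup) {a b : α} (ha : a ∈ l') (hb : b ∈ l')
    (h : l'.idxOf a < l'.idxOf b) : l.idxOf a < l.idxOf b :=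
  pair_sublist_idxOf hl ((idxOf_lt_pair_sublist ha hb h).trans hs)

lemma sublist_idxOf_lt' {α : Type*} [DecidableEq α] {l' l : List α} (hs : List.Sublist l' l)
    (hl : l.Nodup) {a b : α} (ha : a ∈ l') (hb : b ∈ l')
    (h : l.idxOf a < l.idxOf b) : l'.idxOf a < l'.idxOf b := by
  rcases lt_trichotomy (l'.idxOf a) (l'.idxOf b) with h1 | h1 | h1
  · exact h1
  · have : a = b := (List.idxOf_inj ha).mp h1
    subst this; exact absurd h (lt_irrefl _)
  · exact absurd (sublist_idxOf_lt hs hl hb ha h1) (by omega)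

lemma mem_take_idxOf {α : Type*} [DecidableEq α] :
    ∀ {l : List α} {n : ℕ} {x : α}, x ∈ l.take n → l.idxOf x < n
  | [], n, x, h => by simp at h
  | c :: t, 0, x, h => by simp at h
  | c :: t, n + 1, x, h => by
    rw [List.take_succ_cons] at h
    by_cases hxc : x = c
    · subst hxc; rw [List.idxOf_cons_self]; omega
    · have := mem_take_idxOf ((List.mem_cons.mp h).resolve_left hxc)
      rw [List.idxOf_cons_ne _ (Ne.symm hxc)]; omega

lemma idxOf_lt_mem_take {α : Type*} [DecidableEq α] :
    ∀ {l : List α} {n : ℕ} {x : α}, x ∈ l → l.idxOf x < n → x ∈ l.take n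
  | [], n, x, h, _ => by simp at h
  | c :: t, 0, x, _, h' => by omega
  | c :: t, n + 1, x, h, h' => by
    rw [List.take_succ_cons]
    by_cases hxc : x = c
    · subst hxc; exact List.mem_cons_self
    · rw [List.idxOf_cons_ne _ (Ne.symm hxc)] at h'
      exact List.mem_cons.mpr
        (Or.inr (idxOf_lt_mem_take ((List.mem_cons.mp h).resolve_left hxc) (by omega)))

lemma matching_saturated {R H : Type*} [Fintype R] [Fintype H]
    (hcard : Fintype.card R = Fintype.card H) (mu : SMatching R H)
    (hall : ∀ r, ∃ h, mu.mr r = some h) : ∀ h, ∃ r, mu.mh h = some r := by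
  classical
  choose f hf using hall
  have hinj : Function.Injective f := by
    intro a b hab
    have h1 : mu.mh (f a) = some a := (mu.consistent a (f a)).1 (hf a)
    have h2 : mu.mh (f b) = some b := (mu.consistent b (f b)).1 (hf b)
    rw [hab, h2] at h1
    exact (Option.some_inj.mp h1).symm
  have hbij : Function.Bijective f := (Fintype.bijective_iff_injective_and_card f).2 ⟨hinj, hcard⟩
  intro h
  obtain ⟨r, hr⟩ := hbij.2 h
  exact ⟨r, by rw [← hr]; exact (mu.consistent r (f r)).1 (hf r)⟩

/-- The flipped matching. -/
def SMatching.flip {R H : Type*} (mu : SMatching R H) : SMatching H R where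
  mr := mu.mh
  mh := mu.mr
  consistent := fun h r => (mu.consistent r h).symm

/-- If no hospital is under-predicted (each hospital's hospital-optimal
stable partner survives on its truncated list), then `muH` exists in `Ihat`, and the
resident-optimal stable matching `muHat` of `Ihat` (the output of resident-proposing deferred
acceptance on `Ihat`) matches every agent and is stable in `I`. -/
theorem PDA_no_underprediction_perfect
    {R H : Type*} [DecidableEq R] [DecidableEq H] [Fintype R] [Fintype H]
    (hcard : Fintype.card R = Fintype.card H)
    (I Ihat : SMInstance R H) (hC : I.Complete) (hN : I.Nodups)
    (ρ : H → ℕ)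
    (hLh : ∀ h, Ihat.Lh h = (I.Lh h).take (ρ h))
    (hLr : ∀ r, Ihat.Lr r = (I.Lr r).filter (fun h => decide (r ∈ Ihat.Lh h)))
    (muH : SMatching R H) (hHstab : I.IsStable muH)
    (hHopt : ∀ ν : SMatching R H, I.IsStable ν →
      ∀ h, weaklyPrefers (I.Lh h) (muH.mh h) (ν.mh h))
    (hnoUnder : ∀ h r, muH.mh h = some r → r ∈ Ihat.Lh h)
    (muHat : SMatching R H) (hhat : Ihat.IsStable muHat)
    (hropt : ∀ ν : SMatching R H, Ihat.IsStable ν →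
      ∀ r, weaklyPrefers (Ihat.Lr r) (muHat.mr r) (ν.mr r)) :
    Ihat.ExistsIn muH ∧ ((∀ r, muHat.mr r ≠ none) ∧ (∀ h, muHat.mh h ≠ none)) ∧
      I.IsStable muHat := by
  classical
  -- sublist facts
  have hsubLr : ∀ r, List.Sublist (Ihat.Lr r) (I.Lr r) := by
    intro r; rw [hLr r]; exact List.filter_sublist
  have hsubLh : ∀ h, List.Sublist (Ihat.Lh h) (I.Lh h) := by
    intro h; rw [hLh h]; exact List.take_sublist _ _
  -- Part 1: muH exists in Ihat
  have hmrLh : ∀ r h, muH.mr r = some h → r ∈ Ihat.Lh h := by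
    intro r h hm; exact hnoUnder h r ((muH.consistent r h).1 hm)
  have hEx : Ihat.ExistsIn muH := by
    constructor
    · intro r h hm
      rw [hLr r, List.mem_filter]
      exact ⟨hC.1 r h, by simpa using hmrLh r h hm⟩
    · intro h r hm; exact hnoUnder h r hm
  -- muH is stable in Ihat
  have hStabHat : Ihat.IsStable muH := by
    refine ⟨hEx, ?_⟩
    rintro r h ⟨⟨hmem_r, hbet_r⟩, ⟨hmem_h, hbet_h⟩⟩
    refine hHstab.2 r h ⟨⟨(hsubLr r).subset hmem_r, ?_⟩, ⟨(hsubLh h).subset hmem_h, ?_⟩⟩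
    · intro y hy
      have hyI : y ∈ Ihat.Lr r := hEx.1 r y hy
      exact sublist_idxOf_lt (hsubLr r) (hN.1 r) hmem_r hyI (hbet_r y hy)
    · intro y hy
      have hyI : y ∈ Ihat.Lh h := hEx.2 h y hy
      exact sublist_idxOf_lt (hsubLh h) (hN.2 h) hmem_h hyI (hbet_h y hy)
  -- muH matches every resident (completeness + balance)
  have hmuHperf : ∀ r, ∃ h, muH.mr r = some h := by
    intro r
    by_contra hcon
    push_neg at hcon
    have hrnone : muH.mr r = none := by
      cases hmr : muH.mr r with
      | none => rfl
      | some h => exact absurd hmr (hcon h)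
    have hHun : ∃ h, muH.mh h = none := by
      by_contra hcon2
      push_neg at hcon2
      have hall : ∀ h, ∃ r, muH.flip.mr h = some r := by
        intro h
        cases hmh : muH.mh h with
        | none => exact absurd hmh (hcon2 h)
        | some r' => exact ⟨r', by simpa [SMatching.flip] using hmh⟩
      have := matching_saturated hcard.symm muH.flip hall r
      obtain ⟨h, hh⟩ := this
      have : muH.mr r = some h := by
        simpa [SMatching.flip] using hh
      rw [hrnone] at this; simp at this
    obtain ⟨h, hh⟩ := hHun
    exact hHstab.2 r h ⟨⟨hC.1 r h, fun y hy => by rw [hrnone] at hy; simp at hy⟩,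
      ⟨hC.2 h r, fun y hy => by rw [hh] at hy; simp at hy⟩⟩
  -- muHat matches every resident
  have hHatR : ∀ r, ∃ h, muHat.mr r = some h := by
    intro r
    obtain ⟨h, hh⟩ := hmuHperf r
    obtain ⟨x, hx, _⟩ := hropt muH hStabHat r h hh
    exact ⟨x, hx⟩
  -- muHat matches every hospital
  have hHatH : ∀ h, ∃ r, muHat.mh h = some r := matching_saturated hcard muHat hHatR
  refine ⟨hEx, ⟨fun r => ?_, fun h => ?_⟩, ?_⟩
  · obtain ⟨x, hx⟩ := hHatR r; rw [hx]; exact Option.some_ne_none _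
  · obtain ⟨x, hx⟩ := hHatH h; rw [hx]; exact Option.some_ne_none _
  -- muHat is stable in I
  constructor
  · constructor
    · intro r h hm; exact (hsubLr r).subset (hhat.1.1 r h hm)
    · intro h r hm; exact (hsubLh h).subset (hhat.1.2 h r hm)
  · rintro r h ⟨⟨hmem_r, hbet_r⟩, ⟨hmem_h, hbet_h⟩⟩
    -- h is matched in muHat to some r'
    obtain ⟨r', hr'⟩ := hHatH h
    have hr'hat : r' ∈ Ihat.Lh h := hhat.1.2 h r' hr'
    -- r is within the top ρ h of h's list
    have hidxr' : (I.Lh h).idxOf r' < ρ h := by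
      apply mem_take_idxOf
      rw [← hLh h]; exact hr'hat
    have hidxr : (I.Lh h).idxOf r < ρ h :=
      lt_trans (hbet_h r' hr') hidxr'
    have hrhat : r ∈ Ihat.Lh h := by
      rw [hLh h]; exact idxOf_lt_mem_take hmem_h hidxr
    have hhhat : h ∈ Ihat.Lr r := by
      rw [hLr r, List.mem_filter]
      exact ⟨hmem_r, by simpa using hrhat⟩
    -- build a blocking pair in Ihat
    refine hhat.2 r h ⟨⟨hhhat, ?_⟩, ⟨hrhat, ?_⟩⟩
    · intro y hy
      have hyhat : y ∈ Ihat.Lr r := hhat.1.1 r y hy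
      exact sublist_idxOf_lt' (hsubLr r) (hN.1 r) hhhat hyhat (hbet_r y hy)
    · intro y hy
      have hyhat : y ∈ Ihat.Lh h := hhat.1.2 h y hy
      exact sublist_idxOf_lt' (hsubLh h) (hN.2 h) hrhat hyhat (hbet_h y hy)
end

section
/- Closest-stable-matching characterization: Let Î be the prefix-truncated instance and suppose its set M of stable matchings is nonempty and contained in the set of stable matchings of I. Then the resident-optimal stable matching μ̂ of Î attains the minimum of Σ_h [ρ_h − rank(L̂(h), M(h))] over all M ∈ M. -/
variable {R H : Type*} [DecidableEq R] [DecidableEq H]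

/-- The rank (1-based) of an optional partner on a list; `0` if unmatched. -/
def orank {α : Type*} [DecidableEq α] (l : List α) : Option α → ℤ
  | none => 0
  | some a => l.idxOf a + 1


lemma hosp_matched {R H : Type*} [DecidableEq R] [DecidableEq H] [Fintype R] [Fintype H]
    (hcard : Fintype.card R = Fintype.card H)
    (I : SMInstance R H) (hC : I.Complete)
    (μ : SMatching R H) (hst : I.IsStable μ) :
    ∀ h, ∃ r, μ.mh h = some r := by
  intro h0
  by_contra hcon
  push_neg at hcon
  have hnone : μ.mh h0 = none := by
    cases hmh : μ.mh h0 with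
    | none => rfl
    | some r => exact absurd hmh (hcon r)
  have hallr : ∀ r, ∃ h, μ.mr r = some h := by
    intro r
    by_contra hr
    push_neg at hr
    have hrnone : μ.mr r = none := by
      cases hmr : μ.mr r with
      | none => rfl
      | some h => exact absurd hmr (hr h)
    exact hst.2 r h0 ⟨⟨hC.1 r h0, fun y hy => by simp [hrnone] at hy⟩,
      ⟨hC.2 h0 r, fun y hy => by simp [hnone] at hy⟩⟩
  choose f hf using hallr
  have hinj : Function.Injective f := by
    intro r1 r2 he
    have h1 := (μ.consistent r1 (f r1)).mp (hf r1)
    have h2 := (μ.consistent r2 (f r2)).mp (hf r2)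
    rw [he] at h1
    rw [h1] at h2
    exact Option.some_inj.mp h2
  have hbij : Function.Bijective f :=
    (Fintype.bijective_iff_injective_and_card f).mpr ⟨hinj, hcard⟩
  obtain ⟨r, hr⟩ := hbij.2 h0
  exact hcon r ((μ.consistent r h0).mp (hr ▸ hf r))

/-- **Closest stable matching.** If every stable matching of the
prefix-truncated instance `Ihat` is stable in `I`, then the resident-optimal stable matching
`muHat` of `Ihat` minimizes `Σ_h (ρ_h − rank(L̂(h), M(h)))` over all stable matchings `M`
of `Ihat`. -/
theorem PDA_outputs_closest_stable_matching
    {R H : Type*} [DecidableEq R] [DecidableEq H] [Fintype R] [Fintype H]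
    (hcard : Fintype.card R = Fintype.card H)
    (I Ihat : SMInstance R H) (hC : I.Complete) (hN : I.Nodups)
    (ρ : H → ℕ)
    (hLh : ∀ h, Ihat.Lh h = (I.Lh h).take (ρ h))
    (hLr : ∀ r, Ihat.Lr r = (I.Lr r).filter (fun h => decide (r ∈ Ihat.Lh h)))
    (hsub : ∀ ν : SMatching R H, Ihat.IsStable ν → I.IsStable ν)
    (muHat : SMatching R H) (hhat : Ihat.IsStable muHat)
    (hropt : ∀ ν : SMatching R H, Ihat.IsStable ν →
      ∀ r, weaklyPrefers (Ihat.Lr r) (muHat.mr r) (ν.mr r)) :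
    ∀ ν : SMatching R H, Ihat.IsStable ν →
      ∑ h : H, ((ρ h : ℤ) - orank (Ihat.Lh h) (muHat.mh h)) ≤
      ∑ h : H, ((ρ h : ℤ) - orank (Ihat.Lh h) (ν.mh h)) := by
  intro ν hν
  apply Finset.sum_le_sum
  intro h _
  have hn : orank (Ihat.Lh h) (ν.mh h) ≤ orank (Ihat.Lh h) (muHat.mh h) := by
    obtain ⟨r, hr⟩ := hosp_matched hcard I hC muHat (hsub muHat hhat) h
    obtain ⟨r', hr'⟩ := hosp_matched hcard I hC ν (hsub ν hν) h
    rw [hr, hr']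
    simp only [orank, add_le_add_iff_right, Nat.cast_le]
    by_contra hlt
    push_neg at hlt
    -- hlt : indexOf r < indexOf r' on Ihat.Lh h
    have hrmem : r ∈ Ihat.Lh h := hhat.1.2 h r hr
    have hmrh : muHat.mr r = some h := (muHat.consistent r h).mpr hr
    have hhmem : h ∈ Ihat.Lr r := hhat.1.1 r h hmrh
    have hne : r ≠ r' := by
      intro he
      rw [he] at hlt
      exact lt_irrefl _ hlt
    apply hν.2 r h
    constructor
    · refine ⟨hhmem, fun y hy => ?_⟩
      obtain ⟨x, hx, hxy⟩ := hropt ν hν r y hy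
      rw [hmrh] at hx
      have hxh : x = h := (Option.some_inj.mp hx).symm
      rw [hxh] at hxy
      have hyh : h ≠ y := by
        intro he
        rw [← he] at hy
        have : ν.mh h = some r := (ν.consistent r h).mp hy
        rw [hr'] at this
        exact hne (Option.some_inj.mp this).symm
      have hymem : y ∈ Ihat.Lr r := hν.1.1 r y hy
      exact lt_of_le_of_ne hxy (fun he => hyh ((List.idxOf_inj hhmem).mp he))
    · refine ⟨hrmem, fun y hy => ?_⟩
      rw [hr'] at hy
      rw [← Option.some_inj.mp hy]
      exact hlt
  linarith
end

section
/- Monotonicity of tentative matches in deferred acceptance: During any execution of resident-proposing deferred acceptance, the tentative partner of each hospital weakly improves over time (with respect to that hospital's preference list), and the hospital proposed to by each resident weakly worsens over time. -/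
lemma daStep_monotone (n : ℕ) (Lp Lq : Fin n → List (Fin n))
    (s : (Fin n → ℕ) × (Fin n → Option (Fin n))) :
    (∀ r, s.1 r ≤ (daStep n Lp Lq s).1 r) ∧
    (∀ h r, s.2 h = some r →
      ∃ r', (daStep n Lp Lq s).2 h = some r' ∧
        (Lq h).idxOf r' ≤ (Lq h).idxOf r) := by
  unfold daStep
  cases hf : (List.finRange n).find?
      (fun p => decide ((∀ q, s.2 q ≠ some p) ∧ s.1 p < (Lp p).length)) with
  | none => exact ⟨fun r => le_refl _, fun h r hr => ⟨r, hr, le_refl _⟩⟩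
  | some p =>
    dsimp only
    cases hg : (Lp p)[s.1 p]? with
    | none => exact ⟨fun r => le_refl _, fun h r hr => ⟨r, hr, le_refl _⟩⟩
    | some q =>
      dsimp only
      have h1 : ∀ r, s.1 r ≤ Function.update s.1 p (s.1 p + 1) r := by
        intro r
        rcases eq_or_ne r p with rfl | hne
        · simp
        · simp [Function.update_of_ne hne]
      cases hq : s.2 q with
      | none =>
        dsimp only
        refine ⟨h1, fun h r hr => ?_⟩
        rcases eq_or_ne h q with rfl | hne
        · rw [hq] at hr; exact absurd hr (by simp)
        · exact ⟨r, by simpa [Function.update_of_ne hne], le_refl _⟩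
      | some p' =>
        dsimp only
        by_cases hlt : (Lq q).idxOf p < (Lq q).idxOf p'
        · simp only [if_pos hlt]
          refine ⟨h1, fun h r hr => ?_⟩
          rcases eq_or_ne h q with rfl | hne
          · rw [hq] at hr
            obtain rfl : p' = r := Option.some.injEq _ _ ▸ hr
            exact ⟨p, by simp, le_of_lt hlt⟩
          · exact ⟨r, by simpa [Function.update_of_ne hne], le_refl _⟩
        · simp only [if_neg hlt]
          exact ⟨h1, fun h r hr => ⟨r, hr, le_refl _⟩⟩

/-- **Monotonicity of deferred acceptance.** Along any execution of
resident-proposing deferred acceptance, each proposer moves weakly down its own list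
(the hospital it proposes to weakly worsens), and each receiver's tentative partner
weakly improves (and a receiver that holds a proposer never becomes unmatched). -/
theorem deferred_acceptance_monotone
    (n : ℕ) (Lr Lh : Fin n → List (Fin n)) :
    ∀ k l : ℕ, k ≤ l →
      (∀ r, (daRun n Lr Lh k).1 r ≤ (daRun n Lr Lh l).1 r) ∧
      (∀ h r, (daRun n Lr Lh k).2 h = some r →
        ∃ r', (daRun n Lr Lh l).2 h = some r' ∧
          (Lh h).idxOf r' ≤ (Lh h).idxOf r) := by
  intro k l hkl
  induction l with
  | zero =>
    obtain rfl : k = 0 := Nat.le_zero.mp hkl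
    exact ⟨fun r => le_refl _, fun h r hr => ⟨r, hr, le_refl _⟩⟩
  | succ m ih =>
    rcases Nat.eq_or_lt_of_le hkl with rfl | hlt
    · exact ⟨fun r => le_refl _, fun h r hr => ⟨r, hr, le_refl _⟩⟩
    · obtain ⟨ih1, ih2⟩ := ih (Nat.lt_succ_iff.mp hlt)
      obtain ⟨st1, st2⟩ := daStep_monotone n Lr Lh (daRun n Lr Lh m)
      refine ⟨fun r => (ih1 r).trans (st1 r), fun h r hr => ?_⟩
      obtain ⟨r', hr', hle⟩ := ih2 h r hr
      obtain ⟨r'', hr'', hle'⟩ := st2 h r' hr'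
      exact ⟨r'', hr'', hle'.trans hle⟩
end

section
/- In the lower-bound construction from disjointness, if the sets A and B are disjoint then the predicted matching μ̂ (matching same-index agents within each block) is stable in the constructed instance. -/
/-- Agents (on either side) of the lower-bound construction: a block `S` of size `m`
encoding the disjointness instance, padding blocks `Pu`, `Pl` of size `η`, and a
single backup agent `B`. -/
inductive Agent (m η : ℕ) : Type
  | S : Fin m → Agent m η
  | Pu : Fin η → Agent m η
  | Pl : Fin η → Agent m η
  | B : Agent m η
  deriving DecidableEq, Fintype

variable {m η : ℕ}

/-- An injective enumeration of the agents. -/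
def Agent.enum : Agent m η → ℕ
  | .S j => j.val
  | .Pu j => m + j.val
  | .Pl j => m + η + j.val
  | .B => m + 2 * η

/-- Tier width used to build preference keys. -/
def tierWidth (m η : ℕ) : ℕ := m + 2 * η + 2

/-- Preference key of the `i`-th `S`-side agent over agents of the other side, where
`mem i j` says that the pair `(i, j)` (self index `i`, other index `j`) is in the set:
first the `mem`-partners, then `Pu`, then the same-index agent, then `B`, then `Pl`,
then all remaining `S`-agents.  Smaller key means more preferred. -/
def sKey (m η : ℕ) (mem : Fin m → Fin m → Bool) (i : Fin m) : Agent m η → ℕ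
  | .S j => (if j = i then 2 else if mem i j then 0 else 5) * tierWidth m η + j.val
  | .Pu j => 1 * tierWidth m η + j.val
  | .B => 3 * tierWidth m η
  | .Pl j => 4 * tierWidth m η + j.val

/-- Preference key of the `i`-th upper-padding agent: its same-index counterpart first. -/
def puKey (i : Fin η) (a : Agent m η) : ℕ :=
  if a = .Pu i then 0 else a.enum + 1

/-- Preference key of the `i`-th lower-padding agent: its same-index counterpart first. -/
def plKey (i : Fin η) (a : Agent m η) : ℕ :=
  if a = .Pl i then 0 else a.enum + 1

/-- Preference key of the backup agent: `[S | Pu | Pl | B]`. -/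
def bKey : Agent m η → ℕ := Agent.enum

/-- Hospital-side preference keys, built from the set `A`. -/
def hospKey (A : Fin m → Fin m → Bool) : Agent m η → Agent m η → ℕ
  | .S i => sKey m η A i
  | .Pu i => puKey i
  | .Pl i => plKey i
  | .B => bKey

/-- Resident-side preference keys, built from the set `B` (pairs are `(hospital, resident)`). -/
def resKey (B : Fin m → Fin m → Bool) : Agent m η → Agent m η → ℕ
  | .S j => sKey m η (fun j i => B i j) j
  | .Pu i => puKey i
  | .Pl i => plKey i
  | .B => bKey

/-- `(r, h)` is a blocking pair for the perfect matching sending hospital `h` to resident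
`μ h` (with inverse `ν`): each strictly prefers the other to its assigned partner. -/
def BlockPair (A B : Fin m → Fin m → Bool) (μ ν : Agent m η → Agent m η)
    (r h : Agent m η) : Prop :=
  hospKey A h r < hospKey A h (μ h) ∧ resKey B r h < resKey B r (ν r)

/-- In the lower-bound construction, if the sets `A` and `B` are
disjoint (and contain no diagonal pairs), then the predicted matching `μ̂`, matching
same-index agents within every block, is stable: it admits no blocking pair. -/
theorem predicted_matching_stable_of_disjoint
    (m η : ℕ) (A B : Fin m → Fin m → Bool)
    (hA : ∀ i, A i i = false) (hB : ∀ i, B i i = false)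
    (hdisj : ∀ i j, ¬ (A i j = true ∧ B i j = true)) :
    ∀ r h : Agent m η, ¬ BlockPair A B id id r h := by
  rintro r h ⟨h1, h2⟩
  cases h with
  | S i =>
    cases r with
    | S j =>
      simp only [hospKey, resKey, sKey, id] at h1 h2
      have hi := i.isLt; have hj := j.isLt
      by_cases hji : j = i
      · subst hji; simp [tierWidth] at h1
      · have hij : i ≠ j := fun e => hji e.symm
        simp only [if_neg hji, if_neg hij] at h1 h2
        by_cases hAij : A i j
        · have hBij : B i j = false := by
            have := hdisj i j; simp [hAij] at this; simpa using this
          simp [hAij, hBij, tierWidth] at h1 h2; omega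
        · simp only [hAij, if_false] at h1; simp [tierWidth] at h1; omega
    | Pu j =>
      simp [resKey, puKey, Agent.enum, id] at h2
    | Pl j =>
      simp only [hospKey, sKey, id] at h1
      have hi := i.isLt; simp [tierWidth] at h1; omega
    | B =>
      simp only [hospKey, sKey, id] at h1
      have hi := i.isLt; simp [tierWidth] at h1; omega
  | Pu i =>
    cases r <;> simp_all [hospKey, puKey, Agent.enum, BlockPair, id] <;> omega
  | Pl i =>
    cases r <;> simp_all [hospKey, plKey, Agent.enum, BlockPair, id] <;> omega
  | B =>
    cases r with
    | S j =>
      simp only [resKey, sKey, id] at h2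
      have hj := j.isLt; simp [tierWidth] at h2; omega
    | Pu j => simp [resKey, puKey, Agent.enum, id] at h2
    | Pl j => simp [resKey, plKey, Agent.enum, id] at h2
    | B => simp [hospKey, bKey, id] at h1
end

section
/- In the lower-bound construction from disjointness with |A ∩ B| = 1, say A ∩ B = {(î,ĵ)}, the matching obtained from μ̂ by rematching the î-th hospital in S_h to the ĵ-th resident in S_r, the ĵ-th hospital in S_h to the backup resident B_r, and the backup hospital B_h to the î-th resident in S_r (all other pairs unchanged) is a stable matching, differing from μ̂ in the matches of exactly 6 agents. -/
variable {m η : ℕ}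

/-- The matching obtained from the predicted matching by the 3-cycle rematching
`S î ↦ S ĵ`, `S ĵ ↦ B`, `B ↦ S î` on the hospital side. -/
def mu3 (i j : Fin m) : Agent m η → Agent m η := fun a =>
  if a = .S i then .S j else if a = .S j then .B else if a = .B then .S i else a

/-- The inverse of `mu3`: resident `r`'s assigned hospital. -/
def mu3inv (i j : Fin m) : Agent m η → Agent m η := fun a =>
  if a = .S j then .S i else if a = .B then .S j else if a = .S i then .B else a

/-- If `A ∩ B = {(î, ĵ)}` with `î ≠ ĵ`, then rematching the `î`-th
hospital to the `ĵ`-th resident, the `ĵ`-th hospital to the backup resident, and the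
backup hospital to the `î`-th resident (all other pairs unchanged) yields a stable
matching, differing from the predicted matching in the matches of exactly 6 agents
(3 hospitals and 3 residents). -/
theorem rematching_stable_of_single_intersection
    (m η : ℕ) (A B : Fin m → Fin m → Bool)
    (hA : ∀ i, A i i = false) (hB : ∀ i, B i i = false)
    (ihat jhat : Fin m) (hne : ihat ≠ jhat)
    (hmem : A ihat jhat = true ∧ B ihat jhat = true)
    (huniq : ∀ i j, A i j = true → B i j = true → i = ihat ∧ j = jhat) :
    (∀ r h : Agent m η, ¬ BlockPair A B (mu3 ihat jhat) (mu3inv ihat jhat) r h) ∧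
    (Finset.univ.filter (fun h : Agent m η => mu3 ihat jhat h ≠ h)).card = 3 ∧
    (Finset.univ.filter (fun r : Agent m η => mu3inv ihat jhat r ≠ r)).card = 3 := by
  obtain ⟨hmA, hmB⟩ := hmem
  refine ⟨?_, ?_, ?_⟩
  · rintro r h ⟨h1, h2⟩
    cases h with
    | Pu i =>
        simp [mu3, hospKey, puKey] at h1
    | Pl i =>
        simp [mu3, hospKey, plKey] at h1
    | B =>
        simp [mu3, hospKey, bKey] at h1
        cases r with
        | S j =>
            simp only [Agent.enum] at h1
            rcases eq_or_ne j jhat with rfl | hjj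
            · simp [mu3inv, resKey, sKey, tierWidth, hne, hne.symm, hmB] at h2 <;> omega
            · rcases eq_or_ne j ihat with rfl | hji
              · omega
              · simp [mu3inv, resKey, sKey, tierWidth, hjj, hji] at h2 <;> omega
        | Pu j => simp [Agent.enum] at h1 <;> omega
        | Pl j => simp [Agent.enum] at h1 <;> omega
        | B => simp [Agent.enum] at h1 <;> omega
    | S i =>
        cases r with
        | Pu j =>
            simp [mu3inv, resKey, puKey, Agent.enum] at h2
        | Pl j =>
            rcases eq_or_ne i ihat with rfl | hi
            · simp [mu3, hospKey, sKey, tierWidth, hne, hne.symm, hmA] at h1 <;> omega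
            · rcases eq_or_ne i jhat with rfl | hij2
              · simp [mu3, hospKey, sKey, tierWidth, hi] at h1 <;> omega
              · simp [mu3, hospKey, sKey, tierWidth, hi, hij2] at h1 <;> omega
        | B =>
            rcases eq_or_ne i ihat with rfl | hi
            · simp [mu3, hospKey, sKey, tierWidth, hne, hne.symm, hmA] at h1 <;> omega
            · rcases eq_or_ne i jhat with rfl | hij2
              · simp [mu3, hospKey, sKey, tierWidth, hi] at h1 <;> omega
              · simp [mu3, hospKey, sKey, tierWidth, hi, hij2] at h1 <;> omega
        | S j =>
            by_cases hAij : A i j = true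
            · by_cases hBij : B i j = true
              · obtain ⟨rfl, rfl⟩ := huniq _ _ hAij hBij
                simp [mu3, hospKey] at h1
              · have hij' : i ≠ j := fun h => by subst h; simp [hA i] at hAij
                rcases eq_or_ne j jhat with rfl | hjj
                · simp [mu3inv, resKey, sKey, tierWidth, hne, hne.symm, hmB,
                    hBij, hij'] at h2 <;> omega
                · rcases eq_or_ne j ihat with rfl | hji
                  · simp [mu3inv, resKey, sKey, tierWidth, hjj, hBij, hij'] at h2 <;> omega
                  · simp [mu3inv, resKey, sKey, tierWidth, hjj, hji, hBij,
                      hij'] at h2 <;> omega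
            · rcases eq_or_ne j i with rfl | hji
              · rcases eq_or_ne j ihat with rfl | hi
                · simp [mu3, hospKey, sKey, tierWidth, hne, hne.symm, hmA] at h1 <;> omega
                · rcases eq_or_ne j jhat with rfl | hij2
                  · simp [mu3inv, resKey, sKey, tierWidth, hne, hne.symm, hmB,
                      hi] at h2 <;> omega
                  · simp [mu3, hospKey, sKey, tierWidth, hi, hij2] at h1
              · rcases eq_or_ne i ihat with rfl | hi
                · simp [mu3, hospKey, sKey, tierWidth, hne, hne.symm, hmA, hji,
                    hAij] at h1 <;> omega
                · rcases eq_or_ne i jhat with rfl | hij2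
                  · simp [mu3, hospKey, sKey, tierWidth, hi, hji, hAij] at h1 <;> omega
                  · simp [mu3, hospKey, sKey, tierWidth, hi, hij2, hji, hAij] at h1 <;> omega
  · have hset : (Finset.univ.filter (fun h : Agent m η => mu3 ihat jhat h ≠ h))
        = {Agent.S ihat, Agent.S jhat, Agent.B} := by
      ext a
      rw [Finset.mem_filter]
      rcases a with j | j | j | _ <;>
        simp only [Finset.mem_filter, Finset.mem_univ, true_and, Finset.mem_insert,
          Finset.mem_singleton, mu3, Agent.S.injEq, reduceCtorEq, if_false,
          or_false, false_or]
      · rcases eq_or_ne j ihat with rfl | hji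
        · simp [hne, hne.symm]
        · rcases eq_or_ne j jhat with rfl | hjj
          · simp [hji, hne, hne.symm]
          · simp [hji, hjj]
      · simp
      · simp
      · simp
    rw [hset, Finset.card_insert_of_notMem (by simp [hne]),
      Finset.card_insert_of_notMem (by simp), Finset.card_singleton]
  · have hset : (Finset.univ.filter (fun r : Agent m η => mu3inv ihat jhat r ≠ r))
        = {Agent.S ihat, Agent.S jhat, Agent.B} := by
      ext a
      rw [Finset.mem_filter]
      rcases a with j | j | j | _ <;>
        simp only [Finset.mem_filter, Finset.mem_univ, true_and, Finset.mem_insert,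
          Finset.mem_singleton, mu3inv, Agent.S.injEq, reduceCtorEq, if_false,
          or_false, false_or]
      · rcases eq_or_ne j ihat with rfl | hji
        · simp [hne, hne.symm]
        · rcases eq_or_ne j jhat with rfl | hjj
          · simp [hji, hne, hne.symm]
          · simp [hji, hjj]
      · simp
      · simp
      · simp
    rw [hset, Finset.card_insert_of_notMem (by simp [hne]),
      Finset.card_insert_of_notMem (by simp), Finset.card_singleton]
end

section
/- In the lower-bound construction, if the predicted matching μ̂ is not stable, then every stable matching μ of the instance contains an agent a such that the rank of μ(a) on a's list differs from the rank of μ̂(a) on a's list by more than η. -/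
variable {m η : ℕ}

/-- The rank (1-based) of `x` in the strict order given by the key function `key`. -/
def rankIn (key : Agent m η → ℕ) (x : Agent m η) : ℕ :=
  (Finset.univ.filter (fun y => key y < key x)).card + 1

lemma extract (A B : Fin m → Fin m → Bool)
    (hunstable : ∃ r h : Agent m η, BlockPair A B id id r h) :
    ∃ i j : Fin m, j ≠ i ∧ A i j = true ∧ B i j = true := by
  obtain ⟨r, h, hb1, hb2⟩ := hunstable
  simp only [id] at hb1 hb2
  cases h with
  | Pu l => simp only [hospKey, puKey] at hb1; split_ifs at hb1 <;> omega
  | Pl l => simp only [hospKey, plKey] at hb1; split_ifs at hb1 <;> omega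
  | B =>
    cases r with
    | S j =>
      simp only [resKey, sKey] at hb2
      have := j.isLt; simp only [tierWidth] at hb2
      split_ifs at hb2 <;> omega
    | Pu l => simp only [resKey, puKey] at hb2; split_ifs at hb2 <;> omega
    | Pl l => simp only [resKey, plKey] at hb2; split_ifs at hb2 <;> omega
    | B => exact absurd hb2 (lt_irrefl _)
  | S i =>
    cases r with
    | Pu l => simp only [resKey, puKey] at hb2; split_ifs at hb2 <;> omega
    | Pl l => simp only [resKey, plKey] at hb2; split_ifs at hb2 <;> omega
    | B =>
      simp only [hospKey, sKey] at hb1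
      have := i.isLt; simp only [tierWidth] at hb1
      split_ifs at hb1 <;> omega
    | S j =>
      refine ⟨i, j, ?_, ?_, ?_⟩
      · rintro rfl
        simp only [hospKey, sKey, if_true] at hb1
        omega
      · simp only [hospKey, sKey] at hb1
        have := j.isLt; have := i.isLt
        by_cases h1 : j = i
        · subst h1; simp only [if_pos rfl, tierWidth] at hb1; omega
        · by_cases h2 : A i j
          · exact h2
          · exfalso
            rw [if_neg h1, if_neg h2, if_true] at hb1
            simp only [tierWidth] at hb1; omega
      · simp only [resKey, sKey] at hb2
        have := j.isLt; have := i.isLt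
        by_cases h1 : i = j
        · exfalso; rw [if_pos h1, if_true] at hb2
          simp only [tierWidth] at hb2; omega
        · by_cases h2 : B i j
          · exact h2
          · exfalso
            rw [if_neg h1, if_neg h2, if_true] at hb2
            simp only [tierWidth] at hb2; omega

lemma key_gap (mem : Fin m → Fin m → Bool) (i j : Fin m)
    (hne : j ≠ i) (hmem : mem i j = true) :
    rankIn (sKey m η mem i) (.S j) + η < rankIn (sKey m η mem i) (.S i) := by
  classical
  set key := sKey m η mem i with hkey
  have hkj : key (.S j) = j.val := by simp [hkey, sKey, hne, hmem]
  have hki : key (.S i) = 2 * tierWidth m η + i.val := by simp [hkey, sKey]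
  have hkp : ∀ l : Fin η, key (.Pu l) = tierWidth m η + l.val := by
    intro l; simp [hkey, sKey]
  have hjm : j.val < m := j.isLt
  have him : i.val < m := i.isLt
  have hsub : (Finset.univ.filter (fun y => key y < key (.S j)))
      ∪ insert (Agent.S j)
        ((Finset.univ : Finset (Fin η)).image (Agent.Pu : Fin η → Agent m η))
      ⊆ Finset.univ.filter (fun y => key y < key (.S i)) := by
    intro y hy
    simp only [Finset.mem_union, Finset.mem_insert, Finset.mem_image,
      Finset.mem_filter, Finset.mem_univ, true_and] at hy ⊢
    rcases hy with hy | rfl | ⟨l, -, rfl⟩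
    · have : key (.S j) ≤ key (.S i) := by
        rw [hkj, hki]; simp only [tierWidth]; omega
      omega
    · rw [hkj, hki]; simp only [tierWidth]; omega
    · rw [hkp, hki]; have := l.isLt; simp only [tierWidth]; omega
  have hdisj : Disjoint (Finset.univ.filter (fun y => key y < key (.S j)))
      (insert (Agent.S j)
        ((Finset.univ : Finset (Fin η)).image (Agent.Pu : Fin η → Agent m η))) := by
    rw [Finset.disjoint_right]
    intro y hy
    simp only [Finset.mem_insert, Finset.mem_image, Finset.mem_univ, true_and] at hy
    simp only [Finset.mem_filter, Finset.mem_univ, true_and, not_lt]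
    rcases hy with rfl | ⟨l, -, rfl⟩
    · exact le_refl _
    · rw [hkp, hkj]; simp only [tierWidth]; omega
  have hcard : ((Finset.univ.filter (fun y => key y < key (.S j)))
      ∪ insert (Agent.S j)
        ((Finset.univ : Finset (Fin η)).image (Agent.Pu : Fin η → Agent m η))).card
      = (Finset.univ.filter (fun y => key y < key (.S j))).card + (η + 1) := by
    rw [Finset.card_union_of_disjoint hdisj]
    congr 1
    rw [Finset.card_insert_of_notMem, Finset.card_image_of_injective,
      Finset.card_univ, Fintype.card_fin]
    · intro a b hab; injection hab
    · simp
  have := Finset.card_le_card hsub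
  rw [hcard] at this
  simp only [rankIn]
  omega

lemma key_ge (mem : Fin m → Fin m → Bool) (i : Fin m) (x : Agent m η)
    (hdev : |(rankIn (sKey m η mem i) x : ℤ) - (rankIn (sKey m η mem i) (.S i) : ℤ)| ≤ η) :
    tierWidth m η ≤ sKey m η mem i x := by
  cases x with
  | S j' =>
    by_cases h1 : j' = i
    · subst h1; simp [sKey, tierWidth]; omega
    · by_cases h2 : mem i j'
      · exfalso
        have hg := key_gap (m := m) (η := η) mem i j' h1 h2
        have := abs_le.mp hdev
        push_cast at this
        omega
      · simp [sKey, h1, h2]; omega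
  | Pu l => simp [sKey]
  | Pl l => simp [sKey]; omega
  | B => simp [sKey]; omega


/-- In the lower-bound construction, if the predicted matching (matching
same-index agents) is not stable, then every stable matching `μ` of the instance has an
agent whose partner's rank on its list differs from the rank of its predicted partner by
more than `η`. -/
theorem unstable_prediction_forces_large_error
    (m η : ℕ) (A B : Fin m → Fin m → Bool)
    (hA : ∀ i, A i i = false) (hB : ∀ i, B i i = false)
    (hunstable : ∃ r h : Agent m η, BlockPair A B id id r h) :
    ∀ μ : Agent m η ≃ Agent m η,
      (∀ r h : Agent m η, ¬ BlockPair A B μ μ.symm r h) →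
      ∃ a : Agent m η,
        (η : ℤ) < |(rankIn (hospKey A a) (μ a) : ℤ) - (rankIn (hospKey A a) a : ℤ)| ∨
        (η : ℤ) < |(rankIn (resKey B a) (μ.symm a) : ℤ) - (rankIn (resKey B a) a : ℤ)| := by
  intro μ hstable
  by_contra hcon
  push_neg at hcon
  obtain ⟨i, j, hne, hAij, hBij⟩ := extract A B hunstable
  have hd1 : |(rankIn (sKey m η A i) (μ (Agent.S i)) : ℤ)
      - (rankIn (sKey m η A i) (.S i) : ℤ)| ≤ η := by
    have h := (hcon (Agent.S i)).1
    simpa [hospKey] using h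
  have hd2 : |(rankIn (sKey m η (fun a b => B b a) j) (μ.symm (Agent.S j)) : ℤ)
      - (rankIn (sKey m η (fun a b => B b a) j) (.S j) : ℤ)| ≤ η := by
    have h := (hcon (Agent.S j)).2
    simpa [resKey] using h
  refine hstable (Agent.S j) (Agent.S i) ⟨?_, ?_⟩
  · have h2 := key_ge A i (μ (Agent.S i)) hd1
    have h1 : hospKey (m := m) (η := η) A (Agent.S i) (Agent.S j) = j.val := by
      simp [hospKey, sKey, hne, hAij]
    have h3 : hospKey (m := m) (η := η) A (Agent.S i) (μ (Agent.S i)) = sKey m η A i (μ (Agent.S i)) := rfl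
    rw [h1, h3]
    have := j.isLt
    calc j.val < tierWidth m η := by simp only [tierWidth]; omega
      _ ≤ _ := h2
  · have h2 := key_ge (fun a b => B b a) j (μ.symm (Agent.S j)) hd2
    have hne' : i ≠ j := fun h => hne h.symm
    have h1 : resKey (m := m) (η := η) B (Agent.S j) (Agent.S i) = i.val := by
      simp [resKey, sKey, hne', hBij]
    have h3 : resKey (m := m) (η := η) B (Agent.S j) (μ.symm (Agent.S j))
        = sKey m η (fun a b => B b a) j (μ.symm (Agent.S j)) := rfl
    rw [h1, h3]
    have := i.isLt
    calc i.val < tierWidth m η := by simp only [tierWidth]; omega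
      _ ≤ _ := h2
end
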